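/- arXiv:1011.5194 — 4 statements merged into one kernel-verified Lean document; each statement's English description precedes it below -/
import Mathlib

section
/- Let q be a mean-zero stationary process with E|q(0)|⁴ < ∞ that is ρ-mixing with decreasing mixing coefficient ρ. Then for any four points x₁,x₂,x₃,x₄ ∈ ℝ, |E[q(x₁)q(x₂)q(x₃)q(x₄)]| ≤ E|q(0)|⁴ · Σ_{p∈𝒫} ρ^{1/2}(|x_{p(1)}-x_{p(2)}|) ρ^{1/2}(|x_{p(3)}-x_{p(4)}|), where 𝒫 is the set of all 15 ways to choose two (unordered) pairs from {1,2,3,4}. -/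
open MeasureTheory
open scoped ProbabilityTheory ENNReal NNReal

/-- `√ρ(|u-v|) · √ρ(|w-z|)`, the term associated to the choice of pairs
`{u,v}` and `{w,z}` among the four points. -/
noncomputable def pairTerm (ρ : ℝ → ℝ) (u v w z : ℝ) : ℝ :=
  Real.sqrt (ρ |u - v|) * Real.sqrt (ρ |w - z|)

section Aux

/-- If `0 ≤ x ≤ 1` then `x ≤ √x`. -/
lemma self_le_sqrt' {x : ℝ} (h0 : 0 ≤ x) (h1 : x ≤ 1) : x ≤ Real.sqrt x := by
  calc x = Real.sqrt (x ^ 2) := (Real.sqrt_sq h0).symm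
  _ ≤ Real.sqrt x := Real.sqrt_le_sqrt (by nlinarith)

/-- For antitone `ρ` and `t ≤ s`, `ρ s ≤ √(ρ s) √(ρ t)`. -/
lemma rho_le_sqrt_mul_sqrt (ρ : ℝ → ℝ) (hρ0 : ∀ r, 0 ≤ ρ r)
    (hρdec : AntitoneOn ρ (Set.Ici 0)) {s t : ℝ} (hs : 0 ≤ s) (ht : 0 ≤ t) (hts : t ≤ s) :
    ρ s ≤ Real.sqrt (ρ s) * Real.sqrt (ρ t) := by
  have h1 : ρ s ≤ ρ t := hρdec (Set.mem_Ici.2 ht) (Set.mem_Ici.2 hs) hts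
  calc ρ s = Real.sqrt (ρ s) * Real.sqrt (ρ s) := (Real.mul_self_sqrt (hρ0 s)).symm
  _ ≤ Real.sqrt (ρ s) * Real.sqrt (ρ t) :=
    mul_le_mul_of_nonneg_left (Real.sqrt_le_sqrt h1) (Real.sqrt_nonneg _)

/-- The key combinatorial bound: if `{a,b}` is the closest pair, then
`ρ` at the minimal cross distance plus `ρ|a-b| ρ|c-d|` is dominated by the five
pair terms involving the pair `{a,b}`. -/
lemma rho_bound (ρ : ℝ → ℝ) (hρ0 : ∀ r, 0 ≤ ρ r) (hρ1 : ∀ r, ρ r ≤ 1)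
    (hρdec : AntitoneOn ρ (Set.Ici 0)) (a b c d : ℝ)
    (h1 : |a - b| ≤ |a - c|) (h2 : |a - b| ≤ |a - d|)
    (h3 : |a - b| ≤ |b - c|) (h4 : |a - b| ≤ |b - d|) :
    ρ (min (min |a - c| |a - d|) (min |b - c| |b - d|)) + ρ |a - b| * ρ |c - d| ≤
      Real.sqrt (ρ |a - c|) * Real.sqrt (ρ |a - b|) +
      Real.sqrt (ρ |a - d|) * Real.sqrt (ρ |a - b|) +
      Real.sqrt (ρ |b - c|) * Real.sqrt (ρ |a - b|) +
      Real.sqrt (ρ |b - d|) * Real.sqrt (ρ |a - b|) +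
      Real.sqrt (ρ |a - b|) * Real.sqrt (ρ |c - d|) := by
  have n1 : 0 ≤ Real.sqrt (ρ |a - c|) * Real.sqrt (ρ |a - b|) :=
    mul_nonneg (Real.sqrt_nonneg _) (Real.sqrt_nonneg _)
  have n2 : 0 ≤ Real.sqrt (ρ |a - d|) * Real.sqrt (ρ |a - b|) :=
    mul_nonneg (Real.sqrt_nonneg _) (Real.sqrt_nonneg _)
  have n3 : 0 ≤ Real.sqrt (ρ |b - c|) * Real.sqrt (ρ |a - b|) :=
    mul_nonneg (Real.sqrt_nonneg _) (Real.sqrt_nonneg _)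
  have n4 : 0 ≤ Real.sqrt (ρ |b - d|) * Real.sqrt (ρ |a - b|) :=
    mul_nonneg (Real.sqrt_nonneg _) (Real.sqrt_nonneg _)
  have hlast : ρ |a - b| * ρ |c - d| ≤ Real.sqrt (ρ |a - b|) * Real.sqrt (ρ |c - d|) :=
    mul_le_mul (self_le_sqrt' (hρ0 _) (hρ1 _)) (self_le_sqrt' (hρ0 _) (hρ1 _))
      (hρ0 _) (Real.sqrt_nonneg _)
  have hmin : ρ (min (min |a - c| |a - d|) (min |b - c| |b - d|)) ≤
      Real.sqrt (ρ |a - c|) * Real.sqrt (ρ |a - b|) +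
      Real.sqrt (ρ |a - d|) * Real.sqrt (ρ |a - b|) +
      Real.sqrt (ρ |b - c|) * Real.sqrt (ρ |a - b|) +
      Real.sqrt (ρ |b - d|) * Real.sqrt (ρ |a - b|) := by
    rcases min_choice (min |a - c| |a - d|) (min |b - c| |b - d|) with h | h <;> rw [h]
    · rcases min_choice |a - c| |a - d| with h' | h' <;> rw [h']
      · have := rho_le_sqrt_mul_sqrt ρ hρ0 hρdec (abs_nonneg _) (abs_nonneg _) h1
        linarith
      · have := rho_le_sqrt_mul_sqrt ρ hρ0 hρdec (abs_nonneg _) (abs_nonneg _) h2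
        linarith
    · rcases min_choice |b - c| |b - d| with h' | h' <;> rw [h']
      · have := rho_le_sqrt_mul_sqrt ρ hρ0 hρdec (abs_nonneg _) (abs_nonneg _) h3
        linarith
      · have := rho_le_sqrt_mul_sqrt ρ hρ0 hρdec (abs_nonneg _) (abs_nonneg _) h4
        linarith
  linarith

end Aux

/-- Fourth-moment bound for a mean-zero stationary ρ-mixing process: the
fourth moment of `q` at four points is bounded by `E|q(0)|⁴` times the sum over
the 15 ways of choosing two unordered pairs from `{1,2,3,4}` of the products
`ρ^{1/2}(|x_{p(1)}-x_{p(2)}|) ρ^{1/2}(|x_{p(3)}-x_{p(4)}|)`. -/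
theorem stmt_1
    {Ω : Type*} [MeasureSpace Ω] [IsProbabilityMeasure (ℙ : Measure Ω)]
    (q : ℝ → Ω → ℝ) (ρ : ℝ → ℝ)
    (hmeas : ∀ x, Measurable (q x))
    (hstat : ∀ (s : ℝ) (n : ℕ) (pts : Fin n → ℝ),
      Measure.map (fun ω i => q (pts i + s) ω) ℙ =
        Measure.map (fun ω i => q (pts i) ω) ℙ)
    (hmean : ∀ x, (∫ ω, q x ω) = 0)
    (hmom : MemLp (q 0) 4 ℙ)
    (hρ0 : ∀ r, 0 ≤ ρ r) (hρ1 : ∀ r, ρ r ≤ 1)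
    (hρdec : AntitoneOn ρ (Set.Ici 0))
    (hmix : ∀ (A B : Set ℝ) (ξ η : Ω → ℝ),
      Measurable[⨆ x ∈ A, MeasurableSpace.comap (fun ω => q x ω) inferInstance] ξ →
      Measurable[⨆ x ∈ B, MeasurableSpace.comap (fun ω => q x ω) inferInstance] η →
      MemLp ξ 2 ℙ → MemLp η 2 ℙ →
      ∀ r : ℝ, 0 ≤ r → (∀ x ∈ A, ∀ y ∈ B, r ≤ |x - y|) →
      |(∫ ω, ξ ω * η ω) - (∫ ω, ξ ω) * (∫ ω, η ω)| ≤
        ρ r * Real.sqrt (∫ ω, (ξ ω - ∫ ω', ξ ω') ^ 2) *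
          Real.sqrt (∫ ω, (η ω - ∫ ω', η ω') ^ 2))
    (x₁ x₂ x₃ x₄ : ℝ) :
    |∫ ω, q x₁ ω * q x₂ ω * q x₃ ω * q x₄ ω| ≤
      (∫ ω, |q 0 ω| ^ 4) *
        (pairTerm ρ x₁ x₂ x₁ x₃ + pairTerm ρ x₁ x₂ x₁ x₄ + pairTerm ρ x₁ x₂ x₂ x₃ +
         pairTerm ρ x₁ x₂ x₂ x₄ + pairTerm ρ x₁ x₂ x₃ x₄ + pairTerm ρ x₁ x₃ x₁ x₄ +
         pairTerm ρ x₁ x₃ x₂ x₃ + pairTerm ρ x₁ x₃ x₂ x₄ + pairTerm ρ x₁ x₃ x₃ x₄ +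
         pairTerm ρ x₁ x₄ x₂ x₃ + pairTerm ρ x₁ x₄ x₂ x₄ + pairTerm ρ x₁ x₄ x₃ x₄ +
         pairTerm ρ x₂ x₃ x₂ x₄ + pairTerm ρ x₂ x₃ x₃ x₄ + pairTerm ρ x₂ x₄ x₃ x₄) := by
  classical
  set Q : ℝ := ∫ ω, (q 0 ω) ^ 4 with hQdef
  set m2 : ℝ := ∫ ω, (q 0 ω) ^ 2 with hm2def
  have hQ0 : 0 ≤ Q := integral_nonneg fun ω => by positivity
  have hm20 : 0 ≤ m2 := integral_nonneg fun ω => by positivity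
  have hhalf : (1 : ℝ≥0∞) / 2 = 1 / 4 + 1 / 4 := by
    rw [ENNReal.div_add_div_same,
      ENNReal.div_eq_div_iff (by norm_num) (by norm_num) (by norm_num) (by norm_num)]
    norm_num
  -- stationarity: one-point distributions agree
  have hmap : ∀ x : ℝ, Measure.map (q x) ℙ = Measure.map (q 0) ℙ := by
    intro x
    have h := hstat x 1 (fun _ => (0 : ℝ))
    have he : Measurable (fun v : Fin 1 → ℝ => v 0) := measurable_pi_apply 0
    have e1 : q x = (fun v : Fin 1 → ℝ => v 0) ∘
        (fun ω (i : Fin 1) => q ((fun _ : Fin 1 => (0 : ℝ)) i + x) ω) := by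
      funext ω
      show q x ω = q (0 + x) ω
      rw [zero_add]
    have e2 : q 0 = (fun v : Fin 1 → ℝ => v 0) ∘
        (fun ω (i : Fin 1) => q ((fun _ : Fin 1 => (0 : ℝ)) i) ω) := by
      funext ω; rfl
    rw [e1, e2,
      ← Measure.map_map he (measurable_pi_lambda _ fun _ => hmeas _),
      ← Measure.map_map he (measurable_pi_lambda _ fun _ => hmeas _), h]
  -- moment transfer
  have hmom4 : ∀ x : ℝ, ∫ ω, (q x ω) ^ 4 = Q := by
    intro x
    have h1 : ∫ y, y ^ 4 ∂(Measure.map (q x) ℙ) = ∫ ω, (q x ω) ^ 4 :=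
      integral_map (hmeas x).aemeasurable (measurable_id.pow_const 4).aestronglyMeasurable
    have h2 : ∫ y, y ^ 4 ∂(Measure.map (q 0) ℙ) = ∫ ω, (q 0 ω) ^ 4 :=
      integral_map (hmeas 0).aemeasurable (measurable_id.pow_const 4).aestronglyMeasurable
    rw [← h1, hmap x, h2]
  have hmom2 : ∀ x : ℝ, ∫ ω, (q x ω) ^ 2 = m2 := by
    intro x
    have h1 : ∫ y, y ^ 2 ∂(Measure.map (q x) ℙ) = ∫ ω, (q x ω) ^ 2 :=
      integral_map (hmeas x).aemeasurable (measurable_id.pow_const 2).aestronglyMeasurable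
    have h2 : ∫ y, y ^ 2 ∂(Measure.map (q 0) ℙ) = ∫ ω, (q 0 ω) ^ 2 :=
      integral_map (hmeas 0).aemeasurable (measurable_id.pow_const 2).aestronglyMeasurable
    rw [← h1, hmap x, h2]
  have hL4 : ∀ x : ℝ, MemLp (q x) 4 ℙ := by
    intro x
    refine ⟨(hmeas x).aestronglyMeasurable, ?_⟩
    have : eLpNorm (q x) 4 ℙ = eLpNorm (q 0) 4 ℙ := by
      calc eLpNorm (q x) 4 ℙ = eLpNorm (id ∘ q x) 4 ℙ := rfl
      _ = eLpNorm (id : ℝ → ℝ) 4 (Measure.map (q x) ℙ) :=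
        (eLpNorm_map_measure aestronglyMeasurable_id (hmeas x).aemeasurable).symm
      _ = eLpNorm (id : ℝ → ℝ) 4 (Measure.map (q 0) ℙ) := by rw [hmap x]
      _ = eLpNorm (id ∘ q 0) 4 ℙ :=
        eLpNorm_map_measure aestronglyMeasurable_id (hmeas 0).aemeasurable
      _ = eLpNorm (q 0) 4 ℙ := rfl
    rw [this]
    exact hmom.2
  have hL2 : ∀ x : ℝ, MemLp (q x) 2 ℙ :=
    fun x => (hL4 x).mono_exponent (by norm_num)
  -- products of two q's are in L²
  have hmul2 : ∀ a b : ℝ, MemLp (fun ω => q a ω * q b ω) 2 ℙ := by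
    intro a b
    have h := (hL4 b).smul (hL4 a) (hpqr := (⟨by simpa only [one_div] using hhalf.symm⟩ : ENNReal.HolderTriple 4 4 2))
    exact h
  -- Cauchy–Schwarz for squares
  have hCS : ∀ f g : Ω → ℝ, MemLp f 4 ℙ → MemLp g 4 ℙ →
      ∫ ω, (f ω) ^ 2 * (g ω) ^ 2 ≤
        Real.sqrt (∫ ω, (f ω) ^ 4) * Real.sqrt (∫ ω, (g ω) ^ 4) := by
    intro f g hf hg
    have hsq : ∀ (h : Ω → ℝ), MemLp h 4 ℙ →
        MemLp (fun ω => (h ω) ^ 2) (ENNReal.ofReal 2) ℙ := by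
      intro h hh
      have h2 : (ENNReal.ofReal 2) = 2 := by norm_num
      rw [h2]
      have := hh.smul hh (hpqr := (⟨by simpa only [one_div] using hhalf.symm⟩ : ENNReal.HolderTriple 4 4 2))
      have e : (h • h) = fun ω => (h ω) ^ 2 := by
        funext ω; simp [Pi.smul_apply, smul_eq_mul, pow_two]
      rwa [e] at this
    have h := integral_mul_le_Lp_mul_Lq_of_nonneg
      (Real.HolderConjugate.two_two : Real.HolderConjugate 2 2)
      (Filter.Eventually.of_forall fun ω => sq_nonneg (f ω))
      (Filter.Eventually.of_forall fun ω => sq_nonneg (g ω))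
      (hsq f hf) (hsq g hg)
    have e1 : ∫ ω, ((f ω) ^ 2) ^ (2 : ℝ) = ∫ ω, (f ω) ^ 4 :=
      integral_congr_ae (Filter.Eventually.of_forall fun ω =>
        show ((f ω) ^ 2) ^ (2 : ℝ) = (f ω) ^ 4 by
          rw [show ((f ω) ^ 2) ^ (2 : ℝ) = ((f ω) ^ 2) ^ (2 : ℕ) by norm_cast]; ring)
    have e2 : ∫ ω, ((g ω) ^ 2) ^ (2 : ℝ) = ∫ ω, (g ω) ^ 4 :=
      integral_congr_ae (Filter.Eventually.of_forall fun ω =>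
        show ((g ω) ^ 2) ^ (2 : ℝ) = (g ω) ^ 4 by
          rw [show ((g ω) ^ 2) ^ (2 : ℝ) = ((g ω) ^ 2) ^ (2 : ℕ) by norm_cast]; ring)
    rw [e1, e2] at h
    calc ∫ ω, (f ω) ^ 2 * (g ω) ^ 2
        ≤ (∫ ω, (f ω) ^ 4) ^ ((1 : ℝ) / 2) * (∫ ω, (g ω) ^ 4) ^ ((1 : ℝ) / 2) := h
    _ = Real.sqrt (∫ ω, (f ω) ^ 4) * Real.sqrt (∫ ω, (g ω) ^ 4) := by
        rw [Real.sqrt_eq_rpow, Real.sqrt_eq_rpow]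
  -- second moment of products
  have hsq_prod : ∀ a b : ℝ, ∫ ω, (q a ω * q b ω) ^ 2 ≤ Q := by
    intro a b
    calc ∫ ω, (q a ω * q b ω) ^ 2 = ∫ ω, (q a ω) ^ 2 * (q b ω) ^ 2 :=
      integral_congr_ae (Filter.Eventually.of_forall fun ω => by ring)
    _ ≤ Real.sqrt (∫ ω, (q a ω) ^ 4) * Real.sqrt (∫ ω, (q b ω) ^ 4) :=
      hCS _ _ (hL4 a) (hL4 b)
    _ = Real.sqrt Q * Real.sqrt Q := by rw [hmom4 a, hmom4 b]
    _ = Q := Real.mul_self_sqrt hQ0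
  -- m2 ≤ √Q hence m2 * m2 ≤ Q
  have hm2le : m2 ≤ Real.sqrt Q := by
    have h1 := hCS (q 0) (fun _ => (1 : ℝ)) (hL4 0) (memLp_const 1)
    simp [measure_univ] at h1
    rw [hmom2 0, hmom4 0] at h1
    exact h1
  have hm2sq : m2 * m2 ≤ Q := by
    have := mul_self_le_mul_self hm20 hm2le
    rwa [Real.mul_self_sqrt hQ0] at this
  -- variance bound
  have hvar : ∀ ξ : Ω → ℝ, MemLp ξ 2 ℙ →
      ∫ ω, (ξ ω - ∫ ω', ξ ω') ^ 2 ≤ ∫ ω, (ξ ω) ^ 2 := by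
    intro ξ hξ
    have hi : Integrable ξ ℙ := hξ.integrable one_le_two
    have hsq : Integrable (fun ω => (ξ ω) ^ 2) ℙ := hξ.integrable_sq
    have hexp : ∫ ω, (ξ ω - ∫ ω', ξ ω') ^ 2 =
        ∫ ω, (((ξ ω) ^ 2 - (2 * ∫ ω', ξ ω') * ξ ω) + (∫ ω', ξ ω') ^ 2) :=
      integral_congr_ae (Filter.Eventually.of_forall fun ω => by ring)
    have hint2 : Integrable (fun ω => (2 * ∫ ω', ξ ω') * ξ ω) ℙ := hi.const_mul _
    have hint1 : Integrable (fun ω => (ξ ω) ^ 2 - (2 * ∫ ω', ξ ω') * ξ ω) ℙ :=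
      hsq.sub hint2
    rw [hexp, integral_add hint1 (integrable_const _),
      integral_sub hsq hint2, integral_const_mul, integral_const]
    simp only [measure_univ, ENNReal.toReal_one, smul_eq_mul, one_mul, probReal_univ]
    nlinarith [sq_nonneg (∫ ω, ξ ω)]
  -- measurability wrt generated σ-algebras
  have measQ : ∀ (A : Set ℝ) (x : ℝ), x ∈ A →
      Measurable[⨆ y ∈ A, MeasurableSpace.comap (fun ω => q y ω) inferInstance] (q x) := by
    intro A x hx
    have hle : MeasurableSpace.comap (fun ω => q x ω) inferInstance ≤
        ⨆ y ∈ A, MeasurableSpace.comap (fun ω => q y ω) inferInstance :=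
      le_biSup (fun y : ℝ => MeasurableSpace.comap (fun ω => q y ω) inferInstance) hx
    exact fun s hs => hle _ ⟨s, hs, rfl⟩
  -- pair covariance bound
  have hpair : ∀ a b : ℝ, |∫ ω, q a ω * q b ω| ≤ ρ |a - b| * m2 := by
    intro a b
    have hcond : ∀ x ∈ ({a} : Set ℝ), ∀ y ∈ ({b} : Set ℝ), |a - b| ≤ |x - y| := by
      intro x hx y hy
      rw [Set.mem_singleton_iff] at hx hy
      subst hx; subst hy
      exact le_refl _
    have h : |(∫ ω, q a ω * q b ω) - (∫ ω, q a ω) * (∫ ω, q b ω)| ≤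
        ρ |a - b| * Real.sqrt (∫ ω, (q a ω - ∫ ω', q a ω') ^ 2) *
          Real.sqrt (∫ ω, (q b ω - ∫ ω', q b ω') ^ 2) :=
      hmix {a} {b} (q a) (q b) (measQ _ a rfl) (measQ _ b rfl)
        (hL2 a) (hL2 b) |a - b| (abs_nonneg _) hcond
    rw [hmean a, hmean b] at h
    simp only [mul_zero, sub_zero] at h
    rw [hmom2 a, hmom2 b] at h
    calc |∫ ω, q a ω * q b ω| ≤ ρ |a - b| * Real.sqrt m2 * Real.sqrt m2 := h
    _ = ρ |a - b| * (Real.sqrt m2 * Real.sqrt m2) := by ring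
    _ = ρ |a - b| * m2 := by rw [Real.mul_self_sqrt hm20]
  -- the main 2-2 split bound
  have final : ∀ a b c d : ℝ,
      |∫ ω, q a ω * q b ω * (q c ω * q d ω)| ≤
        ρ (min (min |a - c| |a - d|) (min |b - c| |b - d|)) * Q +
          ρ |a - b| * ρ |c - d| * Q := by
    intro a b c d
    have hr0 : 0 ≤ min (min |a - c| |a - d|) (min |b - c| |b - d|) :=
      le_min (le_min (abs_nonneg _) (abs_nonneg _)) (le_min (abs_nonneg _) (abs_nonneg _))
    have hcond : ∀ x ∈ ({a, b} : Set ℝ), ∀ y ∈ ({c, d} : Set ℝ),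
        min (min |a - c| |a - d|) (min |b - c| |b - d|) ≤ |x - y| := by
      intro x hx y hy
      simp only [Set.mem_insert_iff, Set.mem_singleton_iff] at hx hy
      rcases hx with rfl | rfl <;> rcases hy with rfl | rfl
      · exact (min_le_left _ _).trans (min_le_left _ _)
      · exact (min_le_left _ _).trans (min_le_right _ _)
      · exact (min_le_right _ _).trans (min_le_left _ _)
      · exact (min_le_right _ _).trans (min_le_right _ _)
    have hmxi : Measurable[⨆ x ∈ ({a, b} : Set ℝ),
        MeasurableSpace.comap (fun ω => q x ω) inferInstance] (fun ω => q a ω * q b ω) :=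
      (measQ _ a (Set.mem_insert a {b})).mul (measQ _ b (Set.mem_insert_of_mem a rfl))
    have hmeta : Measurable[⨆ x ∈ ({c, d} : Set ℝ),
        MeasurableSpace.comap (fun ω => q x ω) inferInstance] (fun ω => q c ω * q d ω) :=
      (measQ _ c (Set.mem_insert c {d})).mul (measQ _ d (Set.mem_insert_of_mem c rfl))
    have key : |(∫ ω, q a ω * q b ω * (q c ω * q d ω)) -
        (∫ ω, q a ω * q b ω) * (∫ ω, q c ω * q d ω)| ≤
        ρ (min (min |a - c| |a - d|) (min |b - c| |b - d|)) *
          Real.sqrt (∫ ω, (q a ω * q b ω - ∫ ω', q a ω' * q b ω') ^ 2) *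
          Real.sqrt (∫ ω, (q c ω * q d ω - ∫ ω', q c ω' * q d ω') ^ 2) :=
      hmix {a, b} {c, d} (fun ω => q a ω * q b ω) (fun ω => q c ω * q d ω)
        hmxi hmeta (hmul2 a b) (hmul2 c d) _ hr0 hcond
    have hv1 : Real.sqrt (∫ ω, (q a ω * q b ω - ∫ ω', q a ω' * q b ω') ^ 2) ≤
        Real.sqrt Q :=
      Real.sqrt_le_sqrt ((hvar _ (hmul2 a b)).trans (hsq_prod a b))
    have hv2 : Real.sqrt (∫ ω, (q c ω * q d ω - ∫ ω', q c ω' * q d ω') ^ 2) ≤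
        Real.sqrt Q :=
      Real.sqrt_le_sqrt ((hvar _ (hmul2 c d)).trans (hsq_prod c d))
    have h1 : |(∫ ω, q a ω * q b ω * (q c ω * q d ω)) -
        (∫ ω, q a ω * q b ω) * (∫ ω, q c ω * q d ω)| ≤
        ρ (min (min |a - c| |a - d|) (min |b - c| |b - d|)) * Q := by
      refine key.trans ?_
      have s1 : ρ (min (min |a - c| |a - d|) (min |b - c| |b - d|)) *
          Real.sqrt (∫ ω, (q a ω * q b ω - ∫ ω', q a ω' * q b ω') ^ 2) *
          Real.sqrt (∫ ω, (q c ω * q d ω - ∫ ω', q c ω' * q d ω') ^ 2) ≤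
          ρ (min (min |a - c| |a - d|) (min |b - c| |b - d|)) * Real.sqrt Q *
          Real.sqrt (∫ ω, (q c ω * q d ω - ∫ ω', q c ω' * q d ω') ^ 2) := by
        refine mul_le_mul_of_nonneg_right ?_ (Real.sqrt_nonneg _)
        exact mul_le_mul_of_nonneg_left hv1 (hρ0 _)
      have s2 : ρ (min (min |a - c| |a - d|) (min |b - c| |b - d|)) * Real.sqrt Q *
          Real.sqrt (∫ ω, (q c ω * q d ω - ∫ ω', q c ω' * q d ω') ^ 2) ≤
          ρ (min (min |a - c| |a - d|) (min |b - c| |b - d|)) * Real.sqrt Q *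
          Real.sqrt Q :=
        mul_le_mul_of_nonneg_left hv2 (mul_nonneg (hρ0 _) (Real.sqrt_nonneg _))
      have s3 : ρ (min (min |a - c| |a - d|) (min |b - c| |b - d|)) * Real.sqrt Q *
          Real.sqrt Q = ρ (min (min |a - c| |a - d|) (min |b - c| |b - d|)) * Q := by
        rw [mul_assoc, Real.mul_self_sqrt hQ0]
      linarith
    have h2 : |∫ ω, q a ω * q b ω| * |∫ ω, q c ω * q d ω| ≤
        ρ |a - b| * ρ |c - d| * Q := by
      calc |∫ ω, q a ω * q b ω| * |∫ ω, q c ω * q d ω|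
          ≤ (ρ |a - b| * m2) * (ρ |c - d| * m2) :=
        mul_le_mul (hpair a b) (hpair c d) (abs_nonneg _) (mul_nonneg (hρ0 _) hm20)
      _ = (ρ |a - b| * ρ |c - d|) * (m2 * m2) := by ring
      _ ≤ (ρ |a - b| * ρ |c - d|) * Q :=
        mul_le_mul_of_nonneg_left hm2sq (mul_nonneg (hρ0 _) (hρ0 _))
      _ = ρ |a - b| * ρ |c - d| * Q := by ring
    have habs : |∫ ω, q a ω * q b ω * (q c ω * q d ω)| ≤
        |(∫ ω, q a ω * q b ω * (q c ω * q d ω)) -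
          (∫ ω, q a ω * q b ω) * (∫ ω, q c ω * q d ω)| +
        |∫ ω, q a ω * q b ω| * |∫ ω, q c ω * q d ω| := by
      have h3 := abs_add_le ((∫ ω, q a ω * q b ω * (q c ω * q d ω)) -
        (∫ ω, q a ω * q b ω) * (∫ ω, q c ω * q d ω))
        ((∫ ω, q a ω * q b ω) * (∫ ω, q c ω * q d ω))
      rw [sub_add_cancel] at h3
      calc |∫ ω, q a ω * q b ω * (q c ω * q d ω)| ≤
          |(∫ ω, q a ω * q b ω * (q c ω * q d ω)) -
            (∫ ω, q a ω * q b ω) * (∫ ω, q c ω * q d ω)| +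
          |(∫ ω, q a ω * q b ω) * (∫ ω, q c ω * q d ω)| := h3
      _ = _ := by rw [abs_mul]
    linarith
  -- nonnegativity of pair terms
  have pTnn : ∀ u v w z : ℝ, 0 ≤ pairTerm ρ u v w z :=
    fun u v w z => mul_nonneg (Real.sqrt_nonneg _) (Real.sqrt_nonneg _)
  -- rewrite the fourth moment of |q 0|
  have hQeq : (∫ ω, |q 0 ω| ^ 4) = Q := by
    refine integral_congr_ae (Filter.Eventually.of_forall fun ω => ?_)
    show |q 0 ω| ^ 4 = q 0 ω ^ 4
    rw [pow_abs, abs_of_nonneg (by positivity : (0:ℝ) ≤ (q 0 ω) ^ 4)]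
  rw [hQeq]
  -- choose the globally closest pair
  have hm1 : min (min (min |x₁ - x₂| |x₁ - x₃|) (min |x₁ - x₄| |x₂ - x₃|))
      (min |x₂ - x₄| |x₃ - x₄|) ≤ |x₁ - x₂| :=
    (min_le_left _ _).trans ((min_le_left _ _).trans (min_le_left _ _))
  have hm2 : min (min (min |x₁ - x₂| |x₁ - x₃|) (min |x₁ - x₄| |x₂ - x₃|))
      (min |x₂ - x₄| |x₃ - x₄|) ≤ |x₁ - x₃| :=
    (min_le_left _ _).trans ((min_le_left _ _).trans (min_le_right _ _))
  have hm3 : min (min (min |x₁ - x₂| |x₁ - x₃|) (min |x₁ - x₄| |x₂ - x₃|))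
      (min |x₂ - x₄| |x₃ - x₄|) ≤ |x₁ - x₄| :=
    (min_le_left _ _).trans ((min_le_right _ _).trans (min_le_left _ _))
  have hm4 : min (min (min |x₁ - x₂| |x₁ - x₃|) (min |x₁ - x₄| |x₂ - x₃|))
      (min |x₂ - x₄| |x₃ - x₄|) ≤ |x₂ - x₃| :=
    (min_le_left _ _).trans ((min_le_right _ _).trans (min_le_right _ _))
  have hm5 : min (min (min |x₁ - x₂| |x₁ - x₃|) (min |x₁ - x₄| |x₂ - x₃|))
      (min |x₂ - x₄| |x₃ - x₄|) ≤ |x₂ - x₄| :=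
    (min_le_right _ _).trans (min_le_left _ _)
  have hm6 : min (min (min |x₁ - x₂| |x₁ - x₃|) (min |x₁ - x₄| |x₂ - x₃|))
      (min |x₂ - x₄| |x₃ - x₄|) ≤ |x₃ - x₄| :=
    (min_le_right _ _).trans (min_le_right _ _)
  have hmc : min (min (min |x₁ - x₂| |x₁ - x₃|) (min |x₁ - x₄| |x₂ - x₃|))
      (min |x₂ - x₄| |x₃ - x₄|) = |x₁ - x₂| ∨
      min (min (min |x₁ - x₂| |x₁ - x₃|) (min |x₁ - x₄| |x₂ - x₃|))
      (min |x₂ - x₄| |x₃ - x₄|) = |x₁ - x₃| ∨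
      min (min (min |x₁ - x₂| |x₁ - x₃|) (min |x₁ - x₄| |x₂ - x₃|))
      (min |x₂ - x₄| |x₃ - x₄|) = |x₁ - x₄| ∨
      min (min (min |x₁ - x₂| |x₁ - x₃|) (min |x₁ - x₄| |x₂ - x₃|))
      (min |x₂ - x₄| |x₃ - x₄|) = |x₂ - x₃| ∨
      min (min (min |x₁ - x₂| |x₁ - x₃|) (min |x₁ - x₄| |x₂ - x₃|))
      (min |x₂ - x₄| |x₃ - x₄|) = |x₂ - x₄| ∨
      min (min (min |x₁ - x₂| |x₁ - x₃|) (min |x₁ - x₄| |x₂ - x₃|))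
      (min |x₂ - x₄| |x₃ - x₄|) = |x₃ - x₄| := by
    rcases min_choice (min (min |x₁ - x₂| |x₁ - x₃|) (min |x₁ - x₄| |x₂ - x₃|))
      (min |x₂ - x₄| |x₃ - x₄|) with h | h
    · rcases min_choice (min |x₁ - x₂| |x₁ - x₃|) (min |x₁ - x₄| |x₂ - x₃|) with h' | h'
      · rcases min_choice |x₁ - x₂| |x₁ - x₃| with h'' | h''
        · exact Or.inl (h.trans (h'.trans h''))
        · exact Or.inr (Or.inl (h.trans (h'.trans h'')))
      · rcases min_choice |x₁ - x₄| |x₂ - x₃| with h'' | h''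
        · exact Or.inr (Or.inr (Or.inl (h.trans (h'.trans h''))))
        · exact Or.inr (Or.inr (Or.inr (Or.inl (h.trans (h'.trans h'')))))
    · rcases min_choice |x₂ - x₄| |x₃ - x₄| with h'' | h''
      · exact Or.inr (Or.inr (Or.inr (Or.inr (Or.inl (h.trans h'')))))
      · exact Or.inr (Or.inr (Or.inr (Or.inr (Or.inr (h.trans h'')))))
  rcases hmc with h | h | h | h | h | h
  -- case: {x₁, x₂} is the closest pair
  · have e : (∫ ω, q x₁ ω * q x₂ ω * q x₃ ω * q x₄ ω) =
        ∫ ω, q x₁ ω * q x₂ ω * (q x₃ ω * q x₄ ω) :=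
      integral_congr_ae (Filter.Eventually.of_forall fun ω => by ring)
    rw [e]
    refine (final x₁ x₂ x₃ x₄).trans ?_
    have hrb := rho_bound ρ hρ0 hρ1 hρdec x₁ x₂ x₃ x₄
      (h.symm.le.trans hm2) (h.symm.le.trans hm3) (h.symm.le.trans hm4)
      (h.symm.le.trans hm5)
    have hS : ρ (min (min |x₁ - x₃| |x₁ - x₄|) (min |x₂ - x₃| |x₂ - x₄|)) +
        ρ |x₁ - x₂| * ρ |x₃ - x₄| ≤
        pairTerm ρ x₁ x₂ x₁ x₃ + pairTerm ρ x₁ x₂ x₁ x₄ + pairTerm ρ x₁ x₂ x₂ x₃ +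
        pairTerm ρ x₁ x₂ x₂ x₄ + pairTerm ρ x₁ x₂ x₃ x₄ := by
      simp only [pairTerm]
      linarith [hrb]
    linarith [mul_le_mul_of_nonneg_left hS hQ0,
      mul_nonneg hQ0 (pTnn x₁ x₃ x₁ x₄), mul_nonneg hQ0 (pTnn x₁ x₃ x₂ x₃),
      mul_nonneg hQ0 (pTnn x₁ x₃ x₂ x₄), mul_nonneg hQ0 (pTnn x₁ x₃ x₃ x₄),
      mul_nonneg hQ0 (pTnn x₁ x₄ x₂ x₃), mul_nonneg hQ0 (pTnn x₁ x₄ x₂ x₄),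
      mul_nonneg hQ0 (pTnn x₁ x₄ x₃ x₄), mul_nonneg hQ0 (pTnn x₂ x₃ x₂ x₄),
      mul_nonneg hQ0 (pTnn x₂ x₃ x₃ x₄), mul_nonneg hQ0 (pTnn x₂ x₄ x₃ x₄)]
  -- case: {x₁, x₃} is the closest pair
  · have e : (∫ ω, q x₁ ω * q x₂ ω * q x₃ ω * q x₄ ω) =
        ∫ ω, q x₁ ω * q x₃ ω * (q x₂ ω * q x₄ ω) :=
      integral_congr_ae (Filter.Eventually.of_forall fun ω => by ring)
    rw [e]
    refine (final x₁ x₃ x₂ x₄).trans ?_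
    have hrb := rho_bound ρ hρ0 hρ1 hρdec x₁ x₃ x₂ x₄
      (h.symm.le.trans hm1) (h.symm.le.trans hm3)
      (by rw [abs_sub_comm x₃ x₂]; exact h.symm.le.trans hm4) (h.symm.le.trans hm6)
    have hS : ρ (min (min |x₁ - x₂| |x₁ - x₄|) (min |x₃ - x₂| |x₃ - x₄|)) +
        ρ |x₁ - x₃| * ρ |x₂ - x₄| ≤
        pairTerm ρ x₁ x₂ x₁ x₃ + pairTerm ρ x₁ x₃ x₁ x₄ + pairTerm ρ x₁ x₃ x₂ x₃ +
        pairTerm ρ x₁ x₃ x₃ x₄ + pairTerm ρ x₁ x₃ x₂ x₄ := by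
      simp only [pairTerm]
      rw [abs_sub_comm x₂ x₃]
      linarith [hrb]
    linarith [mul_le_mul_of_nonneg_left hS hQ0,
      mul_nonneg hQ0 (pTnn x₁ x₂ x₁ x₄), mul_nonneg hQ0 (pTnn x₁ x₂ x₂ x₃),
      mul_nonneg hQ0 (pTnn x₁ x₂ x₂ x₄), mul_nonneg hQ0 (pTnn x₁ x₂ x₃ x₄),
      mul_nonneg hQ0 (pTnn x₁ x₄ x₂ x₃), mul_nonneg hQ0 (pTnn x₁ x₄ x₂ x₄),
      mul_nonneg hQ0 (pTnn x₁ x₄ x₃ x₄), mul_nonneg hQ0 (pTnn x₂ x₃ x₂ x₄),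
      mul_nonneg hQ0 (pTnn x₂ x₃ x₃ x₄), mul_nonneg hQ0 (pTnn x₂ x₄ x₃ x₄)]
  -- case: {x₁, x₄} is the closest pair
  · have e : (∫ ω, q x₁ ω * q x₂ ω * q x₃ ω * q x₄ ω) =
        ∫ ω, q x₁ ω * q x₄ ω * (q x₂ ω * q x₃ ω) :=
      integral_congr_ae (Filter.Eventually.of_forall fun ω => by ring)
    rw [e]
    refine (final x₁ x₄ x₂ x₃).trans ?_
    have hrb := rho_bound ρ hρ0 hρ1 hρdec x₁ x₄ x₂ x₃
      (h.symm.le.trans hm1) (h.symm.le.trans hm2)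
      (by rw [abs_sub_comm x₄ x₂]; exact h.symm.le.trans hm5)
      (by rw [abs_sub_comm x₄ x₃]; exact h.symm.le.trans hm6)
    have hS : ρ (min (min |x₁ - x₂| |x₁ - x₃|) (min |x₄ - x₂| |x₄ - x₃|)) +
        ρ |x₁ - x₄| * ρ |x₂ - x₃| ≤
        pairTerm ρ x₁ x₂ x₁ x₄ + pairTerm ρ x₁ x₃ x₁ x₄ + pairTerm ρ x₁ x₄ x₂ x₄ +
        pairTerm ρ x₁ x₄ x₃ x₄ + pairTerm ρ x₁ x₄ x₂ x₃ := by
      simp only [pairTerm]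
      rw [abs_sub_comm x₂ x₄, abs_sub_comm x₃ x₄]
      linarith [hrb]
    linarith [mul_le_mul_of_nonneg_left hS hQ0,
      mul_nonneg hQ0 (pTnn x₁ x₂ x₁ x₃), mul_nonneg hQ0 (pTnn x₁ x₂ x₂ x₃),
      mul_nonneg hQ0 (pTnn x₁ x₂ x₂ x₄), mul_nonneg hQ0 (pTnn x₁ x₂ x₃ x₄),
      mul_nonneg hQ0 (pTnn x₁ x₃ x₂ x₃), mul_nonneg hQ0 (pTnn x₁ x₃ x₂ x₄),
      mul_nonneg hQ0 (pTnn x₁ x₃ x₃ x₄), mul_nonneg hQ0 (pTnn x₂ x₃ x₂ x₄),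
      mul_nonneg hQ0 (pTnn x₂ x₃ x₃ x₄), mul_nonneg hQ0 (pTnn x₂ x₄ x₃ x₄)]
  -- case: {x₂, x₃} is the closest pair
  · have e : (∫ ω, q x₁ ω * q x₂ ω * q x₃ ω * q x₄ ω) =
        ∫ ω, q x₂ ω * q x₃ ω * (q x₁ ω * q x₄ ω) :=
      integral_congr_ae (Filter.Eventually.of_forall fun ω => by ring)
    rw [e]
    refine (final x₂ x₃ x₁ x₄).trans ?_
    have hrb := rho_bound ρ hρ0 hρ1 hρdec x₂ x₃ x₁ x₄
      (by rw [abs_sub_comm x₂ x₁]; exact h.symm.le.trans hm1) (h.symm.le.trans hm5)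
      (by rw [abs_sub_comm x₃ x₁]; exact h.symm.le.trans hm2) (h.symm.le.trans hm6)
    have hS : ρ (min (min |x₂ - x₁| |x₂ - x₄|) (min |x₃ - x₁| |x₃ - x₄|)) +
        ρ |x₂ - x₃| * ρ |x₁ - x₄| ≤
        pairTerm ρ x₁ x₂ x₂ x₃ + pairTerm ρ x₂ x₃ x₂ x₄ + pairTerm ρ x₁ x₃ x₂ x₃ +
        pairTerm ρ x₂ x₃ x₃ x₄ + pairTerm ρ x₁ x₄ x₂ x₃ := by
      simp only [pairTerm]
      rw [abs_sub_comm x₁ x₂, abs_sub_comm x₁ x₃]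
      linarith [hrb]
    linarith [mul_le_mul_of_nonneg_left hS hQ0,
      mul_nonneg hQ0 (pTnn x₁ x₂ x₁ x₃), mul_nonneg hQ0 (pTnn x₁ x₂ x₁ x₄),
      mul_nonneg hQ0 (pTnn x₁ x₂ x₂ x₄), mul_nonneg hQ0 (pTnn x₁ x₂ x₃ x₄),
      mul_nonneg hQ0 (pTnn x₁ x₃ x₁ x₄), mul_nonneg hQ0 (pTnn x₁ x₃ x₂ x₄),
      mul_nonneg hQ0 (pTnn x₁ x₃ x₃ x₄), mul_nonneg hQ0 (pTnn x₁ x₄ x₂ x₄),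
      mul_nonneg hQ0 (pTnn x₁ x₄ x₃ x₄), mul_nonneg hQ0 (pTnn x₂ x₄ x₃ x₄)]
  -- case: {x₂, x₄} is the closest pair
  · have e : (∫ ω, q x₁ ω * q x₂ ω * q x₃ ω * q x₄ ω) =
        ∫ ω, q x₂ ω * q x₄ ω * (q x₁ ω * q x₃ ω) :=
      integral_congr_ae (Filter.Eventually.of_forall fun ω => by ring)
    rw [e]
    refine (final x₂ x₄ x₁ x₃).trans ?_
    have hrb := rho_bound ρ hρ0 hρ1 hρdec x₂ x₄ x₁ x₃
      (by rw [abs_sub_comm x₂ x₁]; exact h.symm.le.trans hm1) (h.symm.le.trans hm4)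
      (by rw [abs_sub_comm x₄ x₁]; exact h.symm.le.trans hm3)
      (by rw [abs_sub_comm x₄ x₃]; exact h.symm.le.trans hm6)
    have hS : ρ (min (min |x₂ - x₁| |x₂ - x₃|) (min |x₄ - x₁| |x₄ - x₃|)) +
        ρ |x₂ - x₄| * ρ |x₁ - x₃| ≤
        pairTerm ρ x₁ x₂ x₂ x₄ + pairTerm ρ x₂ x₃ x₂ x₄ + pairTerm ρ x₁ x₄ x₂ x₄ +
        pairTerm ρ x₂ x₄ x₃ x₄ + pairTerm ρ x₁ x₃ x₂ x₄ := by
      simp only [pairTerm]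
      rw [abs_sub_comm x₁ x₂, abs_sub_comm x₁ x₄, abs_sub_comm x₃ x₄]
      linarith [hrb]
    linarith [mul_le_mul_of_nonneg_left hS hQ0,
      mul_nonneg hQ0 (pTnn x₁ x₂ x₁ x₃), mul_nonneg hQ0 (pTnn x₁ x₂ x₁ x₄),
      mul_nonneg hQ0 (pTnn x₁ x₂ x₂ x₃), mul_nonneg hQ0 (pTnn x₁ x₂ x₃ x₄),
      mul_nonneg hQ0 (pTnn x₁ x₃ x₁ x₄), mul_nonneg hQ0 (pTnn x₁ x₃ x₂ x₃),
      mul_nonneg hQ0 (pTnn x₁ x₃ x₃ x₄), mul_nonneg hQ0 (pTnn x₁ x₄ x₂ x₃),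
      mul_nonneg hQ0 (pTnn x₁ x₄ x₃ x₄), mul_nonneg hQ0 (pTnn x₂ x₃ x₃ x₄)]
  -- case: {x₃, x₄} is the closest pair
  · have e : (∫ ω, q x₁ ω * q x₂ ω * q x₃ ω * q x₄ ω) =
        ∫ ω, q x₃ ω * q x₄ ω * (q x₁ ω * q x₂ ω) :=
      integral_congr_ae (Filter.Eventually.of_forall fun ω => by ring)
    rw [e]
    refine (final x₃ x₄ x₁ x₂).trans ?_
    have hrb := rho_bound ρ hρ0 hρ1 hρdec x₃ x₄ x₁ x₂
      (by rw [abs_sub_comm x₃ x₁]; exact h.symm.le.trans hm2)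
      (by rw [abs_sub_comm x₃ x₂]; exact h.symm.le.trans hm4)
      (by rw [abs_sub_comm x₄ x₁]; exact h.symm.le.trans hm3)
      (by rw [abs_sub_comm x₄ x₂]; exact h.symm.le.trans hm5)
    have hS : ρ (min (min |x₃ - x₁| |x₃ - x₂|) (min |x₄ - x₁| |x₄ - x₂|)) +
        ρ |x₃ - x₄| * ρ |x₁ - x₂| ≤
        pairTerm ρ x₁ x₃ x₃ x₄ + pairTerm ρ x₂ x₃ x₃ x₄ + pairTerm ρ x₁ x₄ x₃ x₄ +
        pairTerm ρ x₂ x₄ x₃ x₄ + pairTerm ρ x₁ x₂ x₃ x₄ := by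
      simp only [pairTerm]
      rw [abs_sub_comm x₁ x₃, abs_sub_comm x₂ x₃, abs_sub_comm x₁ x₄,
        abs_sub_comm x₂ x₄]
      linarith [hrb]
    linarith [mul_le_mul_of_nonneg_left hS hQ0,
      mul_nonneg hQ0 (pTnn x₁ x₂ x₁ x₃), mul_nonneg hQ0 (pTnn x₁ x₂ x₁ x₄),
      mul_nonneg hQ0 (pTnn x₁ x₂ x₂ x₃), mul_nonneg hQ0 (pTnn x₁ x₂ x₂ x₄),
      mul_nonneg hQ0 (pTnn x₁ x₃ x₁ x₄), mul_nonneg hQ0 (pTnn x₁ x₃ x₂ x₃),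
      mul_nonneg hQ0 (pTnn x₁ x₃ x₂ x₄), mul_nonneg hQ0 (pTnn x₁ x₄ x₂ x₃),
      mul_nonneg hQ0 (pTnn x₁ x₄ x₂ x₄), mul_nonneg hQ0 (pTnn x₂ x₃ x₂ x₄)]
end

section
/- Let R be a function asymptotic to κτ^{−α} at infinity (α ∈ (0,1), κ > 0), bounded on ℝ. Then for any bounded compactly supported F₁ = F·1_{[a,b]} and F₂ = F·1_{[c,d]}, lim_{ε→0} ε^{−α} ∫∫ R((t−s)/ε) F₁(t) F₂(s) dt ds = ∫∫ κ |t−s|^{−α} F₁(t) F₂(s) dt ds. -/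
open MeasureTheory Filter Set Real
open scoped Topology

lemma II_abs_rpow {r : ℝ} (h : -1 < r) (a b : ℝ) :
    IntervalIntegrable (fun x : ℝ => |x| ^ r) volume a b := by
  have H : ∀ c : ℝ, 0 ≤ c → IntervalIntegrable (fun x : ℝ => |x| ^ r) volume 0 c := by
    intro c hc
    have h0 := intervalIntegral.intervalIntegrable_rpow' (a := 0) (b := c) h
    rw [intervalIntegrable_iff, uIoc_of_le hc] at h0 ⊢
    exact h0.congr_fun (fun x hx => by rw [abs_of_pos hx.1]) measurableSet_Ioc
  have key : ∀ c : ℝ, IntervalIntegrable (fun x : ℝ => |x| ^ r) volume 0 c := by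
    intro c
    rcases le_total 0 c with hc | hc
    · exact H c hc
    · rw [IntervalIntegrable.iff_comp_neg, neg_zero]
      simpa using H (-c) (by linarith)
  exact (key a).symm.trans (key b)

lemma II_abs_rpow_sub {r : ℝ} (h : -1 < r) (t a b : ℝ) :
    IntervalIntegrable (fun s : ℝ => |t - s| ^ r) volume a b := by
  simpa using (II_abs_rpow h (t - a) (t - b)).comp_sub_left t

/-- If `R` is even, bounded, and `R(τ) τ^α → κ` as `τ → ∞` with `α ∈ (0,1)`,
then for bounded measurable `F` and intervals `[a,b]`, `[c,d]`,
`ε^{-α} ∫∫ R((t-s)/ε) F₁(t) F₂(s) dt ds → ∫∫ κ |t-s|^{-α} F₁(t) F₂(s) dt ds`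
as `ε → 0⁺`, where `F₁ = F·1_{[a,b]}`, `F₂ = F·1_{[c,d]}`. -/
theorem stmt_4
    (R F : ℝ → ℝ) (κ α : ℝ) (hα : α ∈ Set.Ioo (0:ℝ) 1) (hκ : 0 < κ)
    (hRmeas : Measurable R) (hRsymm : ∀ τ, R (-τ) = R τ)
    (MR : ℝ) (hRbd : ∀ τ, |R τ| ≤ MR)
    (hasymp : Tendsto (fun τ : ℝ => R τ * τ ^ α) atTop (𝓝 κ))
    (hF : Measurable F) (M : ℝ) (hFbd : ∀ t, |F t| ≤ M)
    (a b c d : ℝ) (hab : a ≤ b) (hcd : c ≤ d) :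
    Tendsto (fun ε : ℝ =>
        ε ^ (-α) * ∫ t in a..b, ∫ s in c..d, R ((t - s) / ε) * F t * F s)
      (𝓝[>] 0)
      (𝓝 (∫ t in a..b, ∫ s in c..d, κ * |t - s| ^ (-α) * F t * F s)) := by
  obtain ⟨hα0, hα1⟩ := hα
  have hα1' : -1 < -α := by linarith
  have hM : 0 ≤ M := le_trans (abs_nonneg _) (hFbd 0)
  have hMR : 0 ≤ MR := le_trans (abs_nonneg _) (hRbd 0)
  -- threshold T from the asymptotics
  obtain ⟨T, hT1, hT⟩ : ∃ T : ℝ, 1 ≤ T ∧ ∀ τ : ℝ, T ≤ τ → |R τ| * τ ^ α ≤ κ + 1 := by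
    obtain ⟨T0, hT0⟩ := (Metric.tendsto_atTop.mp hasymp) 1 one_pos
    refine ⟨max T0 1, le_max_right _ _, fun τ hτ => ?_⟩
    have hτ1 : (1:ℝ) ≤ τ := le_trans (le_max_right _ _) hτ
    have hτpos : 0 < τ := lt_of_lt_of_le one_pos hτ1
    have h1 := hT0 τ (le_trans (le_max_left _ _) hτ)
    rw [Real.dist_eq] at h1
    have h2 : |R τ * τ ^ α| ≤ κ + 1 := by
      have := abs_sub_abs_le_abs_sub (R τ * τ ^ α) κ
      rw [abs_of_pos hκ] at this
      linarith
    calc |R τ| * τ ^ α = |R τ * τ ^ α| := by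
          rw [abs_mul, abs_of_nonneg (rpow_nonneg hτpos.le α)]
      _ ≤ κ + 1 := h2
  have hTpos : (0:ℝ) < T := lt_of_lt_of_le one_pos hT1
  set C0 : ℝ := max (κ + 1) (MR * T ^ α) with hC0
  have hC0pos : 0 < C0 := lt_of_lt_of_le (by linarith) (le_max_left _ _)
  set C : ℝ := C0 * (M * M) with hC
  set μ : Measure ℝ := volume.restrict (Set.Ioc a b) with hμ
  set ν : Measure ℝ := volume.restrict (Set.Ioc c d) with hν
  haveI : IsFiniteMeasure μ := ⟨by
    rw [hμ, Measure.restrict_apply_univ]; exact measure_Ioc_lt_top⟩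
  haveI : IsFiniteMeasure ν := ⟨by
    rw [hν, Measure.restrict_apply_univ]; exact measure_Ioc_lt_top⟩
  -- the key uniform pointwise bound
  have key : ∀ ε : ℝ, 0 < ε → ∀ t s : ℝ, t ≠ s →
      ε ^ (-α) * |R ((t - s) / ε)| ≤ C0 * |t - s| ^ (-α) := by
    intro ε hε t s hts
    set r : ℝ := |t - s| with hr
    have hrpos : 0 < r := abs_pos.mpr (sub_ne_zero.mpr hts)
    have hRu : |R ((t - s) / ε)| = |R (r / ε)| := by
      rcases abs_cases (t - s) with ⟨h1, _⟩ | ⟨h1, _⟩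
      · rw [hr, h1]
      · rw [hr, h1, neg_div, hRsymm]
    have hεα : (0:ℝ) < ε ^ (-α) := rpow_pos_of_pos hε _
    have hrα : (0:ℝ) < r ^ (-α) := rpow_pos_of_pos hrpos _
    rcases le_total T (r / ε) with hcase | hcase
    · -- far regime
      have hbd := hT (r / ε) hcase
      have heq : ε ^ (-α) = r ^ (-α) * (r / ε) ^ α := by
        rw [Real.div_rpow hrpos.le hε.le, Real.rpow_neg hrpos.le, Real.rpow_neg hε.le]
        field_simp
      rw [hRu, heq, mul_assoc]
      have : |R (r / ε)| * (r / ε) ^ α ≤ C0 := le_trans hbd (le_max_left _ _)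
      calc r ^ (-α) * ((r / ε) ^ α * |R (r / ε)|)
          = r ^ (-α) * (|R (r / ε)| * (r / ε) ^ α) := by ring
        _ ≤ r ^ (-α) * C0 := by
            exact mul_le_mul_of_nonneg_left this hrα.le
        _ = C0 * r ^ (-α) := by ring
    · -- near regime
      have hrTε : r ≤ T * ε := by
        rw [div_le_iff₀ hε] at hcase; linarith
      have h1 : (T * ε) ^ (-α) ≤ r ^ (-α) :=
        Real.rpow_le_rpow_of_nonpos hrpos hrTε (by linarith)
      have h2 : (T * ε) ^ (-α) = T ^ (-α) * ε ^ (-α) :=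
        Real.mul_rpow hTpos.le hε.le
      have h3 : ε ^ (-α) ≤ T ^ α * r ^ (-α) := by
        have hTα : (0:ℝ) < T ^ α := rpow_pos_of_pos hTpos _
        have hTα' : T ^ (-α) * T ^ α = 1 := by
          rw [← Real.rpow_add hTpos]; simp
        calc ε ^ (-α) = T ^ α * (T ^ (-α) * ε ^ (-α)) := by
              rw [← mul_assoc, mul_comm (T ^ α), hTα']; ring
          _ ≤ T ^ α * r ^ (-α) := by
              rw [← h2]; exact mul_le_mul_of_nonneg_left h1 hTα.le
      calc ε ^ (-α) * |R ((t - s) / ε)| ≤ ε ^ (-α) * MR :=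
            mul_le_mul_of_nonneg_left (hRbd _) hεα.le
        _ ≤ T ^ α * r ^ (-α) * MR := mul_le_mul_of_nonneg_right h3 hMR
        _ = MR * T ^ α * r ^ (-α) := by ring
        _ ≤ C0 * r ^ (-α) := mul_le_mul_of_nonneg_right (le_max_right _ _) hrα.le
  -- measurability of the kernel
  have hker_meas : Measurable (fun p : ℝ × ℝ => |p.1 - p.2| ^ (-α)) :=
    (measurable_fst.sub measurable_snd).abs.pow_const (-α)
  -- integrability of the kernel on the product measure
  have hker_int : Integrable (fun p : ℝ × ℝ => |p.1 - p.2| ^ (-α)) (μ.prod ν) := by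
    rw [integrable_prod_iff hker_meas.aestronglyMeasurable]
    constructor
    · refine Eventually.of_forall (fun t => ?_)
      rw [hν, ← IntegrableOn, ← intervalIntegrable_iff_integrableOn_Ioc_of_le hcd]
      exact II_abs_rpow_sub hα1' t c d
    · set L : ℝ := |a| + |b| + |c| + |d| + 1 with hL
      have hLpos : 0 < L := by positivity
      set B : ℝ := ∫ u in (-L)..L, |u| ^ (-α) with hB
      refine Integrable.mono' (integrable_const B)
        hker_meas.aestronglyMeasurable.norm.integral_prod_right' ?_
      filter_upwards [ae_restrict_mem measurableSet_Ioc] with t ht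
      have hnonneg : ∀ s : ℝ, 0 ≤ |t - s| ^ (-α) := fun s => rpow_nonneg (abs_nonneg _) _
      have hsub : Set.Ioc c d ⊆ Set.Ioc (t - L) (t + L) := by
        intro s hs
        obtain ⟨hta, htb⟩ := ht
        obtain ⟨hsc, hsd⟩ := hs
        have h1 := le_abs_self b; have h2 := neg_abs_le a
        have h3 := le_abs_self d; have h4 := neg_abs_le c
        have h5 := abs_nonneg a; have h6 := abs_nonneg b
        have h7 := abs_nonneg c; have h8 := abs_nonneg d
        exact ⟨by linarith, by linarith⟩
      have hIL : IntegrableOn (fun s : ℝ => |t - s| ^ (-α)) (Set.Ioc (t - L) (t + L)) := by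
        rw [← intervalIntegrable_iff_integrableOn_Ioc_of_le (by linarith : t - L ≤ t + L)]
        exact II_abs_rpow_sub hα1' t _ _
      have hfun : (fun s : ℝ => ‖|t - s| ^ (-α)‖) = fun s : ℝ => |t - s| ^ (-α) :=
        funext fun s => by rw [Real.norm_eq_abs, abs_of_nonneg (hnonneg s)]
      have step2 : ∫ s in Set.Ioc c d, |t - s| ^ (-α) ≤
          ∫ s in Set.Ioc (t - L) (t + L), |t - s| ^ (-α) :=
        setIntegral_mono_set hIL (Eventually.of_forall hnonneg)
          (HasSubset.Subset.eventuallyLE hsub)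
      have step3 : ∫ s in Set.Ioc (t - L) (t + L), |t - s| ^ (-α) = B := by
        rw [← intervalIntegral.integral_of_le (by linarith : t - L ≤ t + L)]
        have hc := intervalIntegral.integral_comp_sub_left (a := t - L) (b := t + L)
          (fun u : ℝ => |u| ^ (-α)) t
        rw [hc, show t - (t + L) = -L by ring, show t - (t - L) = L by ring, hB]
      rw [Real.norm_eq_abs, hν, hfun,
        abs_of_nonneg (setIntegral_nonneg measurableSet_Ioc (fun s _ => hnonneg s))]
      rw [← step3]; exact step2
  have hg_int : Integrable (fun p : ℝ × ℝ => C * |p.1 - p.2| ^ (-α)) (μ.prod ν) :=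
    hker_int.const_mul C
  -- the diagonal is null
  have hdiag : ∀ᵐ p ∂(μ.prod ν), p.1 ≠ p.2 := by
    have hms : MeasurableSet {p : ℝ × ℝ | p.1 = p.2} :=
      measurableSet_eq_fun measurable_fst measurable_snd
    have hnull : (μ.prod ν) {p : ℝ × ℝ | p.1 = p.2} = 0 := by
      rw [Measure.measure_prod_null hms]
      refine Eventually.of_forall (fun t => ?_)
      show ν (Prod.mk t ⁻¹' {p : ℝ × ℝ | p.1 = p.2}) = 0
      have hpre : (Prod.mk t ⁻¹' {p : ℝ × ℝ | p.1 = p.2}) = {t} := by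
        ext s; simp [eq_comm]
      rw [hpre, hν, Measure.restrict_apply (measurableSet_singleton t)]
      exact le_antisymm (le_trans (measure_mono Set.inter_subset_left) (by simp)) (zero_le)
    rw [ae_iff]
    simpa using hnull
  -- the family of integrands and the limit integrand
  set h : ℝ → ℝ × ℝ → ℝ := fun ε p => R ((p.1 - p.2) / ε) * F p.1 * F p.2 with hh
  set flim : ℝ × ℝ → ℝ := fun p => κ * |p.1 - p.2| ^ (-α) * F p.1 * F p.2 with hflim
  have hh_meas : ∀ ε : ℝ, Measurable (h ε) := fun ε =>
    ((hRmeas.comp ((measurable_fst.sub measurable_snd).div_const ε)).mul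
      (hF.comp measurable_fst)).mul (hF.comp measurable_snd)
  have hh_int : ∀ ε : ℝ, Integrable (h ε) (μ.prod ν) := by
    intro ε
    refine (integrable_const (MR * M * M)).mono' (hh_meas ε).aestronglyMeasurable
      (Eventually.of_forall fun p => ?_)
    rw [Real.norm_eq_abs, hh]
    simp only []
    rw [abs_mul, abs_mul]
    exact mul_le_mul (mul_le_mul (hRbd _) (hFbd _) (abs_nonneg _) hMR) (hFbd _)
      (abs_nonneg _) (by positivity)
  have hflim_meas : Measurable flim :=
    ((measurable_const.mul hker_meas).mul (hF.comp measurable_fst)).mul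
      (hF.comp measurable_snd)
  have hκC0 : κ ≤ C0 := le_trans (by linarith) (le_max_left _ _)
  have hflim_int : Integrable flim (μ.prod ν) := by
    refine hg_int.mono' hflim_meas.aestronglyMeasurable (Eventually.of_forall fun p => ?_)
    have hk : (0:ℝ) ≤ |p.1 - p.2| ^ (-α) := rpow_nonneg (abs_nonneg _) _
    rw [Real.norm_eq_abs, hflim]
    simp only []
    rw [abs_mul, abs_mul, abs_mul, abs_of_nonneg hκ.le, abs_of_nonneg hk]
    calc κ * |p.1 - p.2| ^ (-α) * |F p.1| * |F p.2|
        ≤ C0 * |p.1 - p.2| ^ (-α) * M * M :=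
          mul_le_mul (mul_le_mul (mul_le_mul hκC0 le_rfl hk hC0pos.le) (hFbd p.1)
            (abs_nonneg _) (mul_nonneg hC0pos.le hk)) (hFbd p.2) (abs_nonneg _)
            (mul_nonneg (mul_nonneg hC0pos.le hk) hM)
      _ = C * |p.1 - p.2| ^ (-α) := by rw [hC]; ring
  -- dominated convergence on the product space
  have hmain : Tendsto (fun ε : ℝ => ∫ p, ε ^ (-α) * h ε p ∂(μ.prod ν)) (𝓝[>] 0)
      (𝓝 (∫ p, flim p ∂(μ.prod ν))) := by
    refine tendsto_integral_filter_of_dominated_convergence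
      (fun p => C * |p.1 - p.2| ^ (-α)) ?_ ?_ hg_int ?_
    · exact Eventually.of_forall fun ε => ((hh_meas ε).const_mul _).aestronglyMeasurable
    · filter_upwards [self_mem_nhdsWithin] with ε hε
      have hε' : (0:ℝ) < ε := hε
      filter_upwards [hdiag] with p hp
      have h1 : ε ^ (-α) * |R ((p.1 - p.2) / ε)| ≤ C0 * |p.1 - p.2| ^ (-α) :=
        key ε hε' _ _ hp
      have hk : (0:ℝ) ≤ |p.1 - p.2| ^ (-α) := rpow_nonneg (abs_nonneg _) _
      rw [Real.norm_eq_abs, hh]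
      simp only []
      rw [abs_mul, abs_mul, abs_mul, abs_of_nonneg (rpow_nonneg hε'.le (-α))]
      calc ε ^ (-α) * (|R ((p.1 - p.2) / ε)| * |F p.1| * |F p.2|)
          = ε ^ (-α) * |R ((p.1 - p.2) / ε)| * |F p.1| * |F p.2| := by ring
        _ ≤ (C0 * |p.1 - p.2| ^ (-α)) * M * M :=
            mul_le_mul (mul_le_mul h1 (hFbd p.1) (abs_nonneg _)
              (mul_nonneg hC0pos.le hk)) (hFbd p.2) (abs_nonneg _)
              (mul_nonneg (mul_nonneg hC0pos.le hk) hM)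
        _ = C * |p.1 - p.2| ^ (-α) := by rw [hC]; ring
    · filter_upwards [hdiag] with p hp
      have hrpos : (0:ℝ) < |p.1 - p.2| := abs_pos.mpr (sub_ne_zero.mpr hp)
      have h1 : Tendsto (fun ε : ℝ => |p.1 - p.2| / ε) (𝓝[>] 0) atTop := by
        simpa [div_eq_mul_inv] using tendsto_inv_nhdsGT_zero.const_mul_atTop hrpos
      have h2 : Tendsto (fun ε : ℝ => R (|p.1 - p.2| / ε) * (|p.1 - p.2| / ε) ^ α)
          (𝓝[>] 0) (𝓝 κ) := hasymp.comp h1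
      have h4 := h2.mul_const (|p.1 - p.2| ^ (-α) * F p.1 * F p.2)
      have hlimeq : flim p = κ * (|p.1 - p.2| ^ (-α) * F p.1 * F p.2) := by
        rw [hflim]; simp only []; ring
      rw [hlimeq]
      refine Tendsto.congr' ?_ h4
      filter_upwards [self_mem_nhdsWithin] with ε hε
      have hε' : (0:ℝ) < ε := hε
      have hR' : R ((p.1 - p.2) / ε) = R (|p.1 - p.2| / ε) := by
        rcases abs_cases (p.1 - p.2) with ⟨h5, _⟩ | ⟨h5, _⟩
        · rw [h5]
        · rw [h5, neg_div, hRsymm]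
      have hpow : (|p.1 - p.2| / ε) ^ α * |p.1 - p.2| ^ (-α) = ε ^ (-α) := by
        rw [Real.div_rpow hrpos.le hε'.le, Real.rpow_neg hrpos.le, Real.rpow_neg hε'.le]
        have : |p.1 - p.2| ^ α ≠ 0 := (rpow_pos_of_pos hrpos α).ne'
        field_simp
      rw [hh]
      simp only []
      calc R (|p.1 - p.2| / ε) * (|p.1 - p.2| / ε) ^ α *
            (|p.1 - p.2| ^ (-α) * F p.1 * F p.2)
          = ((|p.1 - p.2| / ε) ^ α * |p.1 - p.2| ^ (-α)) *
            (R (|p.1 - p.2| / ε) * F p.1 * F p.2) := by ring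
        _ = ε ^ (-α) * (R ((p.1 - p.2) / ε) * F p.1 * F p.2) := by rw [hpow, hR']
  -- identify both sides with the product integrals
  have hval : (∫ t in a..b, ∫ s in c..d, κ * |t - s| ^ (-α) * F t * F s)
      = ∫ p, flim p ∂(μ.prod ν) := by
    rw [intervalIntegral.integral_of_le hab]
    simp_rw [intervalIntegral.integral_of_le hcd]
    exact integral_integral (f := fun t s => κ * |t - s| ^ (-α) * F t * F s) hflim_int
  rw [hval]
  refine Tendsto.congr' ?_ hmain
  filter_upwards [self_mem_nhdsWithin] with ε hε
  rw [integral_const_mul]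
  congr 1
  rw [intervalIntegral.integral_of_le hab]
  simp_rw [intervalIntegral.integral_of_le hcd]
  exact (integral_integral (f := fun t s => R ((t - s) / ε) * F t * F s) (hh_int ε)).symm
end

section
/- Let L^h_{11}(x,t) = Σ_{k=1}^N 1_{I_k}(t) g_k(x) c_k where for each k: g_k: [0,1] → ℝ is Lipschitz with constant C₁ and piecewise linear with |g_k| ≤ C₁, and additionally g_k(x) − g_k(y) is constant equal to (y−x)·c'_k with |c'_k| ≤ C₁ whenever x,y both lie outside [x_{k−1}, x_k] on the same side (as realized by g_k(x) = a*D⁻G₀(x,x_k)/h for the explicit Green's function G₀); and |c_k| ≤ C₂. Then ∫₀¹ (L^h_{11}(x,t) − L^h_{11}(y,t))² dt ≤ C |x−y| for a constant C depending only on C₁, C₂ (not on h). -/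
set_option maxHeartbeats 1000000

open MeasureTheory

section Stmt17Aux

noncomputable def stmt17phi (u : ℝ) : ℝ := max 0 (min 1 u)

lemma stmt17phi_nonneg (u : ℝ) : 0 ≤ stmt17phi u := le_max_left _ _
lemma stmt17phi_le_one (u : ℝ) : stmt17phi u ≤ 1 := max_le zero_le_one (min_le_left _ _)
lemma stmt17phi_of_nonpos {u : ℝ} (h : u ≤ 0) : stmt17phi u = 0 :=
  max_eq_left ((min_le_right _ _).trans h)
lemma stmt17phi_of_one_le {u : ℝ} (h : 1 ≤ u) : stmt17phi u = 1 := by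
  rw [stmt17phi, min_eq_left h]; exact max_eq_right zero_le_one
lemma stmt17phi_of_mem {u : ℝ} (h0 : 0 ≤ u) (h1 : u ≤ 1) : stmt17phi u = u := by
  rw [stmt17phi, min_eq_right h1]; exact max_eq_right h0
lemma stmt17phi_lip (u v : ℝ) : |stmt17phi u - stmt17phi v| ≤ |u - v| := by
  simp only [stmt17phi, max_def, min_def]
  split_ifs <;> rw [abs_le] <;> constructor <;>
    linarith [neg_abs_le (u - v), le_abs_self (u - v)]

lemma stmt17Fform (astar : ℝ) (ha : 0 < astar) (G : ℝ → ℝ → ℝ)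
    (hG : ∀ x y, G x y = if x ≤ y then astar⁻¹ * x * (1 - y) else astar⁻¹ * (1 - x) * y)
    (h a x : ℝ) (hh : 0 < h) :
    astar * (G x (a + h) - G x a) / h = -x + stmt17phi ((x - a) / h) := by
  have ha' : astar ≠ 0 := ne_of_gt ha
  rw [hG, hG]
  rcases le_or_gt x a with hxa | hxa
  · rw [if_pos (hxa.trans (by linarith)), if_pos hxa,
      stmt17phi_of_nonpos (div_nonpos_of_nonpos_of_nonneg (by linarith) hh.le)]
    field_simp; ring
  · rcases le_or_gt x (a + h) with hxb | hxb
    · rw [if_pos hxb, if_neg (not_le.2 hxa),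
        stmt17phi_of_mem (div_nonneg (by linarith) hh.le) (by rw [div_le_one hh]; linarith)]
      field_simp; ring
    · rw [if_neg (not_le.2 hxb), if_neg (not_le.2 hxa),
        stmt17phi_of_one_le (by rw [le_div_iff₀ hh]; linarith)]
      field_simp; ring

lemma stmt17_sum_sq_of_mul_eq_zero (s : Finset ℕ) (f : ℕ → ℝ)
    (hf : ∀ i ∈ s, ∀ j ∈ s, i ≠ j → f i * f j = 0) :
    (∑ k ∈ s, f k) ^ 2 = ∑ k ∈ s, f k ^ 2 := by
  rw [sq, Finset.sum_mul_sum]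
  apply Finset.sum_congr rfl
  intro i hi
  rw [Finset.sum_eq_single_of_mem i hi (fun j hj hji => hf i hi j hj (Ne.symm hji)), sq]

lemma stmt17_integral_eval (N : ℕ) (hN : 0 < N) (h : ℝ) (hh : h = 1 / N) (b : ℕ → ℝ) :
    (∫ t in Set.Ioo (0:ℝ) 1,
      (∑ k ∈ Finset.Icc 1 N, (Set.Ioo (((k:ℝ) - 1) * h) ((k:ℝ) * h)).indicator
          (fun _ => b k) t) ^ 2)
      = ∑ k ∈ Finset.Icc 1 N, h * b k ^ 2 := by
  have hh0 : 0 < h := by rw [hh]; positivity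
  have hN1 : (1:ℝ) ≤ N := by exact_mod_cast hN
  have hdisj : ∀ (t : ℝ), ∀ i ∈ Finset.Icc 1 N, ∀ j ∈ Finset.Icc 1 N, i ≠ j →
      (Set.Ioo (((i:ℝ) - 1) * h) ((i:ℝ) * h)).indicator (fun _ => b i) t *
      (Set.Ioo (((j:ℝ) - 1) * h) ((j:ℝ) * h)).indicator (fun _ => b j) t = 0 := by
    intro t i _ j _ hij
    by_cases hti : t ∈ Set.Ioo (((i:ℝ) - 1) * h) ((i:ℝ) * h)
    · have htj : t ∉ Set.Ioo (((j:ℝ) - 1) * h) ((j:ℝ) * h) := by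
        intro htj
        rcases lt_or_gt_of_ne hij with hlt | hlt
        · have h1 : (i:ℝ) ≤ (j:ℝ) - 1 := by
            have : (i:ℕ) + 1 ≤ j := hlt
            have := (Nat.cast_le (α := ℝ)).2 this
            push_cast at this; linarith
          have : (i:ℝ) * h ≤ ((j:ℝ) - 1) * h := by nlinarith
          exact absurd (hti.2.trans_le this) (not_lt.2 htj.1.le)
        · have h1 : (j:ℝ) ≤ (i:ℝ) - 1 := by
            have : (j:ℕ) + 1 ≤ i := hlt
            have := (Nat.cast_le (α := ℝ)).2 this
            push_cast at this; linarith
          have : (j:ℝ) * h ≤ ((i:ℝ) - 1) * h := by nlinarith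
          exact absurd (htj.2.trans_le this) (not_lt.2 hti.1.le)
      rw [Set.indicator_of_notMem htj, mul_zero]
    · rw [Set.indicator_of_notMem hti, zero_mul]
  have hpt : ∀ t : ℝ,
      (∑ k ∈ Finset.Icc 1 N, (Set.Ioo (((k:ℝ) - 1) * h) ((k:ℝ) * h)).indicator
          (fun _ => b k) t) ^ 2
      = ∑ k ∈ Finset.Icc 1 N, (Set.Ioo (((k:ℝ) - 1) * h) ((k:ℝ) * h)).indicator
          (fun _ => b k ^ 2) t := by
    intro t
    rw [stmt17_sum_sq_of_mul_eq_zero _ _ (hdisj t)]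
    apply Finset.sum_congr rfl
    intro k _
    by_cases ht : t ∈ Set.Ioo (((k:ℝ) - 1) * h) ((k:ℝ) * h) <;>
      simp [Set.indicator_of_mem, Set.indicator_of_notMem, ht]
  simp only [hpt]
  rw [MeasureTheory.integral_finset_sum]
  · apply Finset.sum_congr rfl
    intro k hk
    simp only [Finset.mem_Icc] at hk
    have hk1 : (1:ℝ) ≤ (k:ℝ) := by exact_mod_cast hk.1
    have hkN : (k:ℝ) ≤ N := by exact_mod_cast hk.2
    have hsub : Set.Ioo (((k:ℝ) - 1) * h) ((k:ℝ) * h) ⊆ Set.Ioo (0:ℝ) 1 := by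
      intro t ht
      constructor
      · have : (0:ℝ) ≤ ((k:ℝ) - 1) * h := by nlinarith
        linarith [ht.1]
      · have : (k:ℝ) * h ≤ 1 := by
          rw [hh]; rw [mul_one_div, div_le_one (by positivity)]; exact hkN
        linarith [ht.2]
    rw [MeasureTheory.setIntegral_indicator measurableSet_Ioo,
      Set.inter_eq_self_of_subset_right hsub, MeasureTheory.setIntegral_const,
      measureReal_def, Real.volume_Ioo]
    rw [ENNReal.toReal_ofReal (by nlinarith : (0:ℝ) ≤ (k:ℝ) * h - ((k:ℝ)-1) * h)]
    rw [smul_eq_mul]; ring_nf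
  · intro k _
    rw [MeasureTheory.integrable_indicator_iff measurableSet_Ioo]
    refine MeasureTheory.integrableOn_const (ne_of_lt ?_)
    calc (volume.restrict (Set.Ioo (0:ℝ) 1)) (Set.Ioo (((k:ℝ) - 1) * h) ((k:ℝ) * h))
        ≤ volume (Set.Ioo (((k:ℝ) - 1) * h) ((k:ℝ) * h)) := Measure.restrict_le_self _
      _ < ⊤ := by rw [Real.volume_Ioo]; exact ENNReal.ofReal_lt_top

lemma stmt17_core (N : ℕ) (hN : 0 < N) (h : ℝ) (hh : h = 1 / N)
    (x y : ℝ) (hx0 : 0 ≤ x) (hy1 : y ≤ 1) (hxy : x ≤ y) :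
    ∑ k ∈ Finset.Icc 1 N,
      h * ((y - x) + stmt17phi ((x - ((k:ℝ) - 1) * h) / h)
        - stmt17phi ((y - ((k:ℝ) - 1) * h) / h)) ^ 2
      ≤ 13 * (y - x) := by
  classical
  have hh0 : 0 < h := by rw [hh]; positivity
  have hN1 : (1:ℝ) ≤ N := by exact_mod_cast hN
  have hh1 : h ≤ 1 := by rw [hh]; rw [div_le_one (by positivity)]; exact hN1
  set δ := y - x with hδ
  have hδ0 : 0 ≤ δ := by simp [hδ]; linarith
  have hδ1 : δ ≤ 1 := by simp [hδ]; linarith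
  set m := min 1 (δ / h) with hm
  have hm0 : 0 ≤ m := le_min zero_le_one (by positivity)
  have hm1 : m ≤ 1 := min_le_left _ _
  have hmd : m ≤ δ / h := min_le_right _ _
  have hδm : δ ≤ m := by
    apply le_min hδ1
    rw [le_div_iff₀ hh0]; nlinarith
  set p : ℕ → Prop := fun k => y ≤ ((k:ℝ) - 1) * h ∨ (k:ℝ) * h ≤ x with hp
  set D : ℕ → ℝ := fun k =>
    δ + stmt17phi ((x - ((k:ℝ) - 1) * h) / h) - stmt17phi ((y - ((k:ℝ) - 1) * h) / h) with hD
  have hDb : ∀ k : ℕ, D k ^ 2 ≤ 4 * m ^ 2 := by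
    intro k
    have l1 : |stmt17phi ((x - ((k:ℝ) - 1) * h) / h)
        - stmt17phi ((y - ((k:ℝ) - 1) * h) / h)| ≤ m := by
      apply le_min
      · have := stmt17phi_nonneg ((x - ((k:ℝ) - 1) * h) / h)
        have := stmt17phi_le_one ((x - ((k:ℝ) - 1) * h) / h)
        have := stmt17phi_nonneg ((y - ((k:ℝ) - 1) * h) / h)
        have := stmt17phi_le_one ((y - ((k:ℝ) - 1) * h) / h)
        rw [abs_le]; constructor <;> linarith
      · calc |stmt17phi ((x - ((k:ℝ) - 1) * h) / h) - stmt17phi ((y - ((k:ℝ) - 1) * h) / h)|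
            ≤ |(x - ((k:ℝ) - 1) * h) / h - (y - ((k:ℝ) - 1) * h) / h| := stmt17phi_lip _ _
          _ = δ / h := by
              rw [div_sub_div_same, abs_div, abs_of_pos hh0, abs_of_nonpos (by linarith)]
              rw [hδ]; ring
    have l2 : |D k| ≤ 2 * m := by
      have := abs_le.1 l1
      rw [hD, abs_le]; constructor <;> simp only <;> linarith
    nlinarith [abs_nonneg (D k), sq_abs (D k), abs_le.1 l2]
  have hgood : ∀ k : ℕ, p k → D k = δ := by
    intro k hk
    rcases hk with hk | hk
    · rw [hD]; simp only
      rw [stmt17phi_of_nonpos (by apply div_nonpos_of_nonpos_of_nonneg _ hh0.le; linarith),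
        stmt17phi_of_nonpos (by apply div_nonpos_of_nonpos_of_nonneg _ hh0.le; linarith)]
      ring
    · rw [hD]; simp only
      rw [stmt17phi_of_one_le (by rw [le_div_iff₀ hh0]; nlinarith),
        stmt17phi_of_one_le (by rw [le_div_iff₀ hh0]; nlinarith)]
      ring
  rw [← Finset.sum_filter_add_sum_filter_not (Finset.Icc 1 N) p]
  have goodsum : (∑ k ∈ (Finset.Icc 1 N).filter p, h * D k ^ 2) ≤ δ := by
    calc (∑ k ∈ (Finset.Icc 1 N).filter p, h * D k ^ 2)
        = ∑ k ∈ (Finset.Icc 1 N).filter p, h * δ ^ 2 := by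
          apply Finset.sum_congr rfl
          intro k hk
          rw [hgood k (Finset.mem_filter.1 hk).2]
      _ = ((Finset.Icc 1 N).filter p).card * (h * δ ^ 2) := by
          rw [Finset.sum_const, nsmul_eq_mul]
      _ ≤ N * (h * δ ^ 2) := by
          apply mul_le_mul_of_nonneg_right _ (by positivity)
          have : ((Finset.Icc 1 N).filter p).card ≤ (Finset.Icc 1 N).card :=
            Finset.card_filter_le _ _
          have h2 : (Finset.Icc 1 N).card = N := by rw [Nat.card_Icc]; omega
          exact_mod_cast h2 ▸ this
      _ ≤ δ := by
          rw [hh]; rw [show (N:ℝ) * (1 / N * δ ^ 2) = δ ^ 2 by field_simp]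
          nlinarith
  have badsum : (∑ k ∈ (Finset.Icc 1 N).filter (fun k => ¬ p k), h * D k ^ 2) ≤ 12 * δ := by
    have hcard : (((Finset.Icc 1 N).filter (fun k => ¬ p k)).card : ℝ) ≤ δ / h + 2 := by
      have hsub : (Finset.Icc 1 N).filter (fun k => ¬ p k) ⊆
          Finset.Icc (⌊x / h⌋₊ + 1) (⌊y / h⌋₊ + 1) := by
        intro k hk
        rcases Finset.mem_filter.1 hk with ⟨hk1, hk2⟩
        simp only [hp, not_or, not_le] at hk2
        obtain ⟨hky, hkx⟩ := hk2
        rcases Finset.mem_Icc.1 hk1 with ⟨hk1', _⟩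
        rw [Finset.mem_Icc]
        constructor
        · have : x / h < k := by rw [div_lt_iff₀ hh0]; linarith [hkx]
          have := (Nat.floor_lt (by positivity)).2 this
          omega
        · have hkr : ((k - 1 : ℕ) : ℝ) ≤ y / h := by
            rw [Nat.cast_sub hk1']
            rw [le_div_iff₀ hh0]
            push_cast; linarith
          have := Nat.le_floor hkr
          omega
      have hcard2 := Finset.card_le_card hsub
      rw [Nat.card_Icc] at hcard2
      have hfx : x / h < ⌊x / h⌋₊ + 1 := Nat.lt_floor_add_one _
      have hfy : (⌊y / h⌋₊ : ℝ) ≤ y / h := Nat.floor_le (div_nonneg (by linarith) hh0.le)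
      rcases le_or_gt (⌊x / h⌋₊ + 1) (⌊y / h⌋₊ + 1) with hle | hlt
      · have heq : ((⌊y / h⌋₊ + 1 + 1 - (⌊x / h⌋₊ + 1) : ℕ) : ℝ)
            = (⌊y / h⌋₊ : ℝ) + 1 - ⌊x / h⌋₊ := by
          rw [Nat.cast_sub (by omega)]; push_cast; ring
        calc (((Finset.Icc 1 N).filter (fun k => ¬ p k)).card : ℝ)
            ≤ ((⌊y / h⌋₊ + 1 + 1 - (⌊x / h⌋₊ + 1) : ℕ) : ℝ) := by exact_mod_cast hcard2
          _ = (⌊y / h⌋₊ : ℝ) + 1 - ⌊x / h⌋₊ := heq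
          _ ≤ δ / h + 2 := by
              have : δ / h = y / h - x / h := by rw [hδ]; ring
              rw [this]; linarith
      · have : ⌊y / h⌋₊ + 1 + 1 - (⌊x / h⌋₊ + 1) ≤ 1 := by omega
        have h1 : (((Finset.Icc 1 N).filter (fun k => ¬ p k)).card : ℝ) ≤ 1 := by
          exact_mod_cast hcard2.trans this
        have : (0:ℝ) ≤ δ / h := by positivity
        linarith
    calc (∑ k ∈ (Finset.Icc 1 N).filter (fun k => ¬ p k), h * D k ^ 2)
        ≤ ((Finset.Icc 1 N).filter (fun k => ¬ p k)).card • (h * (4 * m ^ 2)) := by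
          apply Finset.sum_le_card_nsmul
          intro k _
          exact mul_le_mul_of_nonneg_left (hDb k) hh0.le
      _ = (((Finset.Icc 1 N).filter (fun k => ¬ p k)).card : ℝ) * (h * (4 * m ^ 2)) := by
          rw [nsmul_eq_mul]
      _ ≤ (δ / h + 2) * (h * (4 * m ^ 2)) := by
          apply mul_le_mul_of_nonneg_right hcard (by positivity)
      _ ≤ 12 * δ := by
          have e1 : (δ / h + 2) * (h * (4 * m ^ 2)) = 4 * δ * m ^ 2 + 8 * h * m ^ 2 := by
            field_simp; ring
          rw [e1]
          have hm2 : m ^ 2 ≤ 1 := by nlinarith [hm0, hm1]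
          have e2 : 4 * δ * m ^ 2 ≤ 4 * δ := by nlinarith [hδ0, hm2]
          have e3 : 8 * h * m ^ 2 ≤ 8 * δ := by
            have : m * m ≤ 1 * (δ / h) := mul_le_mul hm1 hmd hm0 zero_le_one
            calc 8 * h * m ^ 2 = 8 * h * (m * m) := by ring
              _ ≤ 8 * h * (1 * (δ / h)) := by nlinarith
              _ = 8 * δ := by field_simp
          linarith
  linarith

lemma stmt17_aux (C₂ : ℝ) (hC₂ : 0 ≤ C₂)
    (astar : ℝ) (ha : 0 < astar) (N : ℕ) (hN : 0 < N) (h : ℝ) (hh : h = 1 / N)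
    (G : ℝ → ℝ → ℝ)
    (hG : ∀ x y, G x y = if x ≤ y then astar⁻¹ * x * (1 - y) else astar⁻¹ * (1 - x) * y)
    (c : ℕ → ℝ) (hc : ∀ k, |c k| ≤ C₂)
    (x : ℝ) (hx : x ∈ Set.Icc (0:ℝ) 1) (y : ℝ) (hy : y ∈ Set.Icc (0:ℝ) 1) (hxy : x ≤ y) :
    (∫ t in Set.Ioo (0:ℝ) 1,
      ((∑ k ∈ Finset.Icc 1 N, (Set.Ioo (((k:ℝ) - 1) * h) ((k:ℝ) * h)).indicator
          (fun _ => astar * (G x ((k:ℝ) * h) - G x (((k:ℝ) - 1) * h)) / h * c k) t) -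
       (∑ k ∈ Finset.Icc 1 N, (Set.Ioo (((k:ℝ) - 1) * h) ((k:ℝ) * h)).indicator
          (fun _ => astar * (G y ((k:ℝ) * h) - G y (((k:ℝ) - 1) * h)) / h * c k) t)) ^ 2)
      ≤ (13 * C₂ ^ 2 + 1) * (y - x) := by
  have hh0 : 0 < h := by rw [hh]; positivity
  have hF : ∀ z : ℝ, ∀ k : ℕ,
      astar * (G z ((k:ℝ) * h) - G z (((k:ℝ) - 1) * h)) / h
        = -z + stmt17phi ((z - ((k:ℝ) - 1) * h) / h) := by
    intro z k
    have e : (k:ℝ) * h = ((k:ℝ) - 1) * h + h := by ring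
    rw [e]
    exact stmt17Fform astar ha G hG h _ z hh0
  set b : ℕ → ℝ := fun k =>
    ((y - x) + stmt17phi ((x - ((k:ℝ) - 1) * h) / h)
      - stmt17phi ((y - ((k:ℝ) - 1) * h) / h)) * c k with hb
  have hpt : ∀ t : ℝ,
      ((∑ k ∈ Finset.Icc 1 N, (Set.Ioo (((k:ℝ) - 1) * h) ((k:ℝ) * h)).indicator
          (fun _ => astar * (G x ((k:ℝ) * h) - G x (((k:ℝ) - 1) * h)) / h * c k) t) -
       (∑ k ∈ Finset.Icc 1 N, (Set.Ioo (((k:ℝ) - 1) * h) ((k:ℝ) * h)).indicator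
          (fun _ => astar * (G y ((k:ℝ) * h) - G y (((k:ℝ) - 1) * h)) / h * c k) t))
      = ∑ k ∈ Finset.Icc 1 N, (Set.Ioo (((k:ℝ) - 1) * h) ((k:ℝ) * h)).indicator
          (fun _ => b k) t := by
    intro t
    rw [← Finset.sum_sub_distrib]
    apply Finset.sum_congr rfl
    intro k _
    by_cases ht : t ∈ Set.Ioo (((k:ℝ) - 1) * h) ((k:ℝ) * h)
    · rw [Set.indicator_of_mem ht, Set.indicator_of_mem ht, Set.indicator_of_mem ht,
        hF x k, hF y k, hb]
      ring
    · rw [Set.indicator_of_notMem ht, Set.indicator_of_notMem ht,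
        Set.indicator_of_notMem ht, sub_zero]
  calc (∫ t in Set.Ioo (0:ℝ) 1,
      ((∑ k ∈ Finset.Icc 1 N, (Set.Ioo (((k:ℝ) - 1) * h) ((k:ℝ) * h)).indicator
          (fun _ => astar * (G x ((k:ℝ) * h) - G x (((k:ℝ) - 1) * h)) / h * c k) t) -
       (∑ k ∈ Finset.Icc 1 N, (Set.Ioo (((k:ℝ) - 1) * h) ((k:ℝ) * h)).indicator
          (fun _ => astar * (G y ((k:ℝ) * h) - G y (((k:ℝ) - 1) * h)) / h * c k) t)) ^ 2)
      = ∫ t in Set.Ioo (0:ℝ) 1,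
        (∑ k ∈ Finset.Icc 1 N, (Set.Ioo (((k:ℝ) - 1) * h) ((k:ℝ) * h)).indicator
          (fun _ => b k) t) ^ 2 := by
        apply MeasureTheory.integral_congr_ae
        filter_upwards with t
        rw [hpt t]
    _ = ∑ k ∈ Finset.Icc 1 N, h * b k ^ 2 := stmt17_integral_eval N hN h hh b
    _ ≤ C₂ ^ 2 * ∑ k ∈ Finset.Icc 1 N,
          h * ((y - x) + stmt17phi ((x - ((k:ℝ) - 1) * h) / h)
            - stmt17phi ((y - ((k:ℝ) - 1) * h) / h)) ^ 2 := by
        rw [Finset.mul_sum]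
        apply Finset.sum_le_sum
        intro k _
        rw [hb]
        have hck : c k ^ 2 ≤ C₂ ^ 2 := by
          have := hc k
          nlinarith [abs_nonneg (c k), sq_abs (c k)]
        have hnn : 0 ≤ ((y - x) + stmt17phi ((x - ((k:ℝ) - 1) * h) / h)
            - stmt17phi ((y - ((k:ℝ) - 1) * h) / h)) ^ 2 := sq_nonneg _
        calc h * (((y - x) + stmt17phi ((x - ((k:ℝ) - 1) * h) / h)
              - stmt17phi ((y - ((k:ℝ) - 1) * h) / h)) * c k) ^ 2
            = h * (((y - x) + stmt17phi ((x - ((k:ℝ) - 1) * h) / h)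
              - stmt17phi ((y - ((k:ℝ) - 1) * h) / h)) ^ 2 * c k ^ 2) := by ring
          _ ≤ h * (((y - x) + stmt17phi ((x - ((k:ℝ) - 1) * h) / h)
              - stmt17phi ((y - ((k:ℝ) - 1) * h) / h)) ^ 2 * C₂ ^ 2) := by
              apply mul_le_mul_of_nonneg_left _ hh0.le
              exact mul_le_mul_of_nonneg_left hck hnn
          _ = C₂ ^ 2 * (h * ((y - x) + stmt17phi ((x - ((k:ℝ) - 1) * h) / h)
              - stmt17phi ((y - ((k:ℝ) - 1) * h) / h)) ^ 2) := by ring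
    _ ≤ C₂ ^ 2 * (13 * (y - x)) := by
        apply mul_le_mul_of_nonneg_left _ (by positivity)
        exact stmt17_core N hN h hh x y hx.1 hy.2 hxy
    _ ≤ (13 * C₂ ^ 2 + 1) * (y - x) := by nlinarith [hxy, sq_nonneg C₂]

end Stmt17Aux

/-- L²-in-`t` modulus of continuity for the kernel
`L^h_{11}(x,t) = Σ_k 1_{I_k}(t) (a* D⁻G₀(x,x_k)/h) c_k`, built from the explicit
Green's function `G₀` and coefficients `|c_k| ≤ C₂`:
`∫₀¹ (L^h_{11}(x,t) - L^h_{11}(y,t))² dt ≤ C |x-y|`, with `C` depending only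
on `C₂` (not on the mesh size `h`). -/
theorem stmt_17 (C₂ : ℝ) (hC₂ : 0 ≤ C₂) :
    ∃ C : ℝ, 0 < C ∧
      ∀ (astar : ℝ), 0 < astar → ∀ (N : ℕ), 0 < N → ∀ h : ℝ, h = 1 / N →
      ∀ (G : ℝ → ℝ → ℝ),
        (∀ x y, G x y =
          if x ≤ y then astar⁻¹ * x * (1 - y) else astar⁻¹ * (1 - x) * y) →
      ∀ (c : ℕ → ℝ), (∀ k, |c k| ≤ C₂) →
      ∀ x ∈ Set.Icc (0:ℝ) 1, ∀ y ∈ Set.Icc (0:ℝ) 1,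
      (∫ t in Set.Ioo (0:ℝ) 1,
        ((∑ k ∈ Finset.Icc 1 N, (Set.Ioo (((k:ℝ) - 1) * h) ((k:ℝ) * h)).indicator
            (fun _ => astar * (G x ((k:ℝ) * h) - G x (((k:ℝ) - 1) * h)) / h * c k) t) -
         (∑ k ∈ Finset.Icc 1 N, (Set.Ioo (((k:ℝ) - 1) * h) ((k:ℝ) * h)).indicator
            (fun _ => astar * (G y ((k:ℝ) * h) - G y (((k:ℝ) - 1) * h)) / h * c k) t)) ^ 2)
        ≤ C * |x - y| := by
  refine ⟨13 * C₂ ^ 2 + 1, by positivity, ?_⟩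
  intro astar ha N hN h hh G hG c hc x hx y hy
  rcases le_total x y with hxy | hxy
  · have := stmt17_aux C₂ hC₂ astar ha N hN h hh G hG c hc x hx y hy hxy
    have habs : |x - y| = y - x := by rw [abs_sub_comm, abs_of_nonneg (by linarith)]
    rw [habs]
    exact this
  · have := stmt17_aux C₂ hC₂ astar ha N hN h hh G hG c hc y hy x hx hxy
    have habs : |x - y| = x - y := abs_of_nonneg (by linarith)
    rw [habs]
    calc (∫ t in Set.Ioo (0:ℝ) 1,
        ((∑ k ∈ Finset.Icc 1 N, (Set.Ioo (((k:ℝ) - 1) * h) ((k:ℝ) * h)).indicator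
            (fun _ => astar * (G x ((k:ℝ) * h) - G x (((k:ℝ) - 1) * h)) / h * c k) t) -
         (∑ k ∈ Finset.Icc 1 N, (Set.Ioo (((k:ℝ) - 1) * h) ((k:ℝ) * h)).indicator
            (fun _ => astar * (G y ((k:ℝ) * h) - G y (((k:ℝ) - 1) * h)) / h * c k) t)) ^ 2)
        = ∫ t in Set.Ioo (0:ℝ) 1,
          ((∑ k ∈ Finset.Icc 1 N, (Set.Ioo (((k:ℝ) - 1) * h) ((k:ℝ) * h)).indicator
              (fun _ => astar * (G y ((k:ℝ) * h) - G y (((k:ℝ) - 1) * h)) / h * c k) t) -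
           (∑ k ∈ Finset.Icc 1 N, (Set.Ioo (((k:ℝ) - 1) * h) ((k:ℝ) * h)).indicator
              (fun _ => astar * (G x ((k:ℝ) * h) - G x (((k:ℝ) - 1) * h)) / h * c k) t)) ^ 2 := by
          apply MeasureTheory.integral_congr_ae
          filter_upwards with t
          ring
      _ ≤ (13 * C₂ ^ 2 + 1) * (x - y) := this
end

section
/- Let L^h₂(x,t) = c_{j(x)}(1_{[x_{j(x)−1}, x]}(t) − ((x − x_{j(x)−1})/h) 1_{I_{j(x)}}(t)) where j(x) is the index with x ∈ (x_{j(x)−1}, x_{j(x)}] and |c_j| ≤ C₀ uniformly. Then for x, y in the same mesh interval I_j, ∫₀¹ (L^h₂(x,t) − L^h₂(y,t))² dt = c_j² |x−y| (1 − |x−y|/h); and for arbitrary x, y ∈ [0,1], ∫₀¹ (L^h₂(x,t) − L^h₂(y,t))² dt ≤ C |x−y| with C depending only on C₀. -/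
open MeasureTheory Set

private lemma ind_integrable (p q : ℝ) :
    IntegrableOn (fun t => (Ioc p q).indicator (fun _ => (1:ℝ)) t) (Ioo (0:ℝ) 1) := by
  have : IntegrableOn (fun _ : ℝ => (1:ℝ)) (Ioc p q) volume :=
    integrableOn_const (by rw [Real.volume_Ioc]; exact ENNReal.ofReal_ne_top)
  exact ((integrable_indicator_iff measurableSet_Ioc).2 this).integrableOn

private lemma ind_int (p q : ℝ) (h0 : 0 ≤ p) (hpq : p ≤ q) (h1 : q ≤ 1) :
    ∫ t in Ioo (0:ℝ) 1, (Ioc p q).indicator (fun _ => (1:ℝ)) t = q - p := by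
  rw [setIntegral_indicator measurableSet_Ioc, setIntegral_const]
  have hvol : volume (Ioo (0:ℝ) 1 ∩ Ioc p q) = ENNReal.ofReal (q - p) := by
    apply le_antisymm
    · calc volume (Ioo (0:ℝ) 1 ∩ Ioc p q) ≤ volume (Ioc p q) :=
            measure_mono inter_subset_right
        _ = ENNReal.ofReal (q - p) := Real.volume_Ioc
    · calc ENNReal.ofReal (q - p) = volume (Ioo p q) := Real.volume_Ioo.symm
        _ ≤ volume (Ioo (0:ℝ) 1 ∩ Ioc p q) := measure_mono (fun t ht =>
            ⟨⟨lt_of_le_of_lt h0 ht.1, lt_of_lt_of_le ht.2 h1⟩, ht.1, le_of_lt ht.2⟩)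
  rw [measureReal_def, hvol, ENNReal.toReal_ofReal (by linarith), smul_eq_mul, mul_one]

private lemma sq_pt (y x a b r c : ℝ) (hay : a ≤ y) (hxb : x ≤ b) (t : ℝ) :
    (c * ((Ioc y x).indicator (fun _ => (1:ℝ)) t - r * (Ioc a b).indicator (fun _ => (1:ℝ)) t))^2
    = (c^2*(1-2*r)) * (Ioc y x).indicator (fun _ => (1:ℝ)) t
      + (c^2*r^2) * (Ioc a b).indicator (fun _ => (1:ℝ)) t := by
  by_cases h1 : t ∈ Ioc y x
  · have h2 : t ∈ Ioc a b := ⟨lt_of_le_of_lt hay h1.1, le_trans h1.2 hxb⟩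
    simp only [indicator_of_mem, h1, h2]; ring
  · by_cases h2 : t ∈ Ioc a b
    · simp only [indicator_of_notMem h1, indicator_of_mem h2]; ring
    · simp only [indicator_of_notMem h1, indicator_of_notMem h2]; ring

private lemma sq_integrable (y x a b r c : ℝ) (hay : a ≤ y) (hxb : x ≤ b) :
    IntegrableOn (fun t =>
      (c * ((Ioc y x).indicator (fun _ => (1:ℝ)) t - r * (Ioc a b).indicator (fun _ => (1:ℝ)) t))^2)
      (Ioo (0:ℝ) 1) := by
  have := ((ind_integrable y x).const_mul (c^2*(1-2*r))).add
    ((ind_integrable a b).const_mul (c^2*r^2))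
  exact this.congr (Filter.Eventually.of_forall (fun t => (sq_pt y x a b r c hay hxb t).symm))

private lemma sq_int (a b y x r c : ℝ) (ha : 0 ≤ a) (hay : a ≤ y) (hyx : y ≤ x)
    (hxb : x ≤ b) (hb : b ≤ 1) :
    (∫ t in Ioo (0:ℝ) 1,
      (c * ((Ioc y x).indicator (fun _ => (1:ℝ)) t - r * (Ioc a b).indicator (fun _ => (1:ℝ)) t))^2)
    = c^2 * ((1 - 2*r) * (x - y) + r^2 * (b - a)) := by
  have h := setIntegral_congr_fun (μ := volume) measurableSet_Ioo
    (fun t (_ : t ∈ Ioo (0:ℝ) 1) => sq_pt y x a b r c hay hxb t)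
  rw [h, integral_add ((ind_integrable y x).const_mul _) ((ind_integrable a b).const_mul _),
    MeasureTheory.integral_const_mul, MeasureTheory.integral_const_mul,
    ind_int y x (le_trans ha hay) hyx (le_trans hxb hb),
    ind_int a b ha (le_trans hay (le_trans hyx hxb)) hb]
  ring

set_option maxHeartbeats 2000000 in
/-- L²-in-`t` modulus of continuity for the kernel
`L^h₂(x,t) = c_{j(x)}(1_{[x_{j(x)-1},x]}(t) - ((x - x_{j(x)-1})/h) 1_{I_{j(x)}}(t))`
with `j(x) = ⌈x/h⌉` and `|c_j| ≤ C₀`: for `x,y` in the same mesh interval the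
exact identity `∫₀¹ (L^h₂(x,·) - L^h₂(y,·))² = c_j² |x-y|(1 - |x-y|/h)` holds,
and for arbitrary `x,y ∈ [0,1]`, `∫₀¹ (L^h₂(x,·) - L^h₂(y,·))² ≤ C |x-y|` with
`C` depending only on `C₀`. -/
theorem stmt_18 (C₀ : ℝ) (hC₀ : 0 ≤ C₀) :
    ∃ C : ℝ, 0 < C ∧
      ∀ (N : ℕ), 0 < N → ∀ h : ℝ, h = 1 / N →
      ∀ (c : ℕ → ℝ), (∀ k, |c k| ≤ C₀) →
      ∀ (L : ℝ → ℝ → ℝ),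
        (∀ x t, L x t = c (Nat.ceil (x / h)) *
          ((Set.Icc (((Nat.ceil (x / h) : ℝ) - 1) * h) x).indicator
              (fun _ => (1:ℝ)) t -
            (x - ((Nat.ceil (x / h) : ℝ) - 1) * h) / h *
              (Set.Ioc (((Nat.ceil (x / h) : ℝ) - 1) * h)
                ((Nat.ceil (x / h) : ℝ) * h)).indicator (fun _ => (1:ℝ)) t)) →
      ((∀ j ∈ Finset.Icc 1 N, ∀ x ∈ Set.Ioc (((j:ℝ) - 1) * h) ((j:ℝ) * h),
          ∀ y ∈ Set.Ioc (((j:ℝ) - 1) * h) ((j:ℝ) * h),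
          (∫ t in Set.Ioo (0:ℝ) 1, (L x t - L y t) ^ 2) =
            (c j) ^ 2 * |x - y| * (1 - |x - y| / h)) ∧
        (∀ x ∈ Set.Icc (0:ℝ) 1, ∀ y ∈ Set.Icc (0:ℝ) 1,
          (∫ t in Set.Ioo (0:ℝ) 1, (L x t - L y t) ^ 2) ≤ C * |x - y|)) := by
  refine ⟨4*C₀^2 + 1, by positivity, ?_⟩
  intro N hN h hhN c hc L hL
  have hNpos : (0:ℝ) < N := Nat.cast_pos.2 hN
  have hh : 0 < h := by rw [hhN]; positivity
  have hNh : (N:ℝ) * h = 1 := by rw [hhN]; field_simp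
  -- ceil characterization
  have hceil : ∀ (j : ℕ) (x : ℝ), 1 ≤ j → ((j:ℝ)-1)*h < x → x ≤ (j:ℝ)*h →
      (Nat.ceil (x/h) : ℕ) = j := by
    intro j x hj h1 h2
    rw [Nat.ceil_eq_iff (by omega)]
    constructor
    · have : ((j - 1 : ℕ) : ℝ) = (j:ℝ) - 1 := by
        push_cast [Nat.cast_sub hj]; ring
      rw [this, lt_div_iff₀ hh]; linarith
    · rw [div_le_iff₀ hh]; linarith
  -- same-interval exact identity (for y ≤ x)
  have hsame : ∀ (j : ℕ), 1 ≤ j → j ≤ N →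
      ∀ x ∈ Set.Ioc (((j:ℝ) - 1) * h) ((j:ℝ) * h),
      ∀ y ∈ Set.Ioc (((j:ℝ) - 1) * h) ((j:ℝ) * h), y ≤ x →
      (∫ t in Set.Ioo (0:ℝ) 1, (L x t - L y t) ^ 2) =
        (c j) ^ 2 * (x - y) * (1 - (x - y) / h) := by
    intro j hj1 hjN x hx y hy hyx
    set a := ((j:ℝ) - 1) * h with ha_def
    set b := ((j:ℝ)) * h with hb_def
    have ha : 0 ≤ a := by
      have : (1:ℝ) ≤ (j:ℝ) := by exact_mod_cast hj1
      have : (0:ℝ) ≤ (j:ℝ) - 1 := by linarith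
      positivity
    have hb : b ≤ 1 := by
      have : (j:ℝ) ≤ (N:ℝ) := by exact_mod_cast hjN
      calc (j:ℝ) * h ≤ (N:ℝ) * h := by nlinarith
        _ = 1 := hNh
    have hjx := hceil j x hj1 hx.1 hx.2
    have hjy := hceil j y hj1 hy.1 hy.2
    have hptw : ∀ t, L x t - L y t =
        c j * ((Ioc y x).indicator (fun _ => (1:ℝ)) t -
          ((x - y)/h) * (Ioc a b).indicator (fun _ => (1:ℝ)) t) := by
      intro t
      rw [hL x t, hL y t, hjx, hjy]
      have hIcc : (Icc a x).indicator (fun _ => (1:ℝ)) t -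
          (Icc a y).indicator (fun _ => (1:ℝ)) t =
          (Ioc y x).indicator (fun _ => (1:ℝ)) t := by
        by_cases h1 : t ∈ Icc a y
        · have h2 : t ∈ Icc a x := ⟨h1.1, le_trans h1.2 hyx⟩
          have h3 : t ∉ Ioc y x := fun hmem => absurd h1.2 (not_le.2 hmem.1)
          simp [indicator_of_mem, h1, h2, indicator_of_notMem h3]
        · by_cases h2 : t ∈ Icc a x
          · have h3 : t ∈ Ioc y x := by
              constructor
              · by_contra hc'
                exact h1 ⟨h2.1, le_of_not_gt hc'⟩
              · exact h2.2
            simp [indicator_of_mem, h2, h3, indicator_of_notMem h1]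
          · have h3 : t ∉ Ioc y x := fun hmem =>
              h2 ⟨le_trans hy.1.le (le_of_lt hmem.1), hmem.2⟩
            simp [indicator_of_notMem h1, indicator_of_notMem h2, indicator_of_notMem h3]
      rw [← hIcc]
      have hhne : h ≠ 0 := ne_of_gt hh
      field_simp
      ring
    simp only [hptw]
    rw [sq_int a b y x ((x-y)/h) (c j) ha hy.1.le hyx hx.2 hb]
    have hhne : h ≠ 0 := ne_of_gt hh
    have hba : b - a = h := by rw [ha_def, hb_def]; ring
    rw [hba]
    field_simp
    ring
  have hcb : ∀ k, (c k)^2 ≤ C₀^2 := fun k => by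
    have h1 := hc k
    have h2 := abs_nonneg (c k)
    nlinarith [sq_abs (c k)]
  -- location facts for x ∈ (0,1]
  have hmem : ∀ x ∈ Set.Ioc (0:ℝ) 1, 1 ≤ ⌈x/h⌉₊ ∧ ⌈x/h⌉₊ ≤ N ∧
      ((⌈x/h⌉₊:ℝ)-1)*h < x ∧ x ≤ (⌈x/h⌉₊:ℝ)*h := by
    intro x hx
    have hxh : 0 < x/h := div_pos hx.1 hh
    refine ⟨Nat.one_le_ceil_iff.2 hxh, ?_, ?_, ?_⟩
    · exact Nat.ceil_le.2 ((div_le_iff₀ hh).2 (by rw [hNh]; exact hx.2))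
    · have h1 := Nat.ceil_lt_add_one (le_of_lt hxh)
      have h2 : x/h * h = x := div_mul_cancel₀ x (ne_of_gt hh)
      nlinarith
    · have h1 := Nat.le_ceil (x/h)
      have h2 : x/h * h = x := div_mul_cancel₀ x (ne_of_gt hh)
      nlinarith
  -- single-kernel facts
  have hsq : ∀ x ∈ Set.Ioc (0:ℝ) 1,
      ((∫ t in Set.Ioo (0:ℝ) 1, (L x t) ^ 2) =
        (c ⌈x/h⌉₊) ^ 2 * (x - ((⌈x/h⌉₊:ℝ)-1)*h) * (1 - (x - ((⌈x/h⌉₊:ℝ)-1)*h)/h)) ∧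
      IntegrableOn (fun t => (L x t)^2) (Set.Ioo (0:ℝ) 1) ∧
      (∫ t in Set.Ioo (0:ℝ) 1, (L x t) ^ 2) ≤ C₀^2 * (x - ((⌈x/h⌉₊:ℝ)-1)*h) ∧
      (∫ t in Set.Ioo (0:ℝ) 1, (L x t) ^ 2) ≤ C₀^2 * ((⌈x/h⌉₊:ℝ)*h - x) := by
    intro x hx
    obtain ⟨hj1, hjN, hax, hxb⟩ := hmem x hx
    set j := ⌈x/h⌉₊ with hj_def
    set a := ((j:ℝ)-1)*h with ha_def
    set b := ((j:ℝ))*h with hb_def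
    have ha : 0 ≤ a := by
      have h1 : (1:ℝ) ≤ (j:ℝ) := by exact_mod_cast hj1
      have h2 : (0:ℝ) ≤ (j:ℝ) - 1 := by linarith
      positivity
    have hb1 : b ≤ 1 := by
      have h1 : (j:ℝ) ≤ (N:ℝ) := by exact_mod_cast hjN
      calc ((j:ℝ))*h ≤ (N:ℝ)*h := by nlinarith
        _ = 1 := hNh
    have haeq : ∀ t, t ≠ a → (L x t)^2 =
        (c j * ((Ioc a x).indicator (fun _ => (1:ℝ)) t -
          ((x-a)/h) * (Ioc a b).indicator (fun _ => (1:ℝ)) t))^2 := by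
      intro t ht
      rw [hL x t]
      have hIcc : (Icc a x).indicator (fun _ => (1:ℝ)) t =
          (Ioc a x).indicator (fun _ => (1:ℝ)) t := by
        by_cases h1 : t ∈ Ioc a x
        · rw [indicator_of_mem h1, indicator_of_mem (mem_Icc.2 ⟨h1.1.le, h1.2⟩)]
        · by_cases h2 : t ∈ Icc a x
          · exact absurd (le_antisymm (le_of_not_gt fun hlt => h1 ⟨hlt, h2.2⟩) h2.1) ht
          · rw [indicator_of_notMem h1, indicator_of_notMem h2]
      rw [hIcc]
    have hae : ∀ᵐ t : ℝ ∂volume, t ≠ a := by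
      rw [ae_iff]
      simp only [ne_eq, not_not, Set.setOf_eq_eq_singleton]
      exact measure_singleton a
    have hval : (∫ t in Set.Ioo (0:ℝ) 1, (L x t) ^ 2) =
        (c j) ^ 2 * (x - a) * (1 - (x - a)/h) := by
      have step1 : (∫ t in Set.Ioo (0:ℝ) 1, (L x t)^2) =
          ∫ t in Set.Ioo (0:ℝ) 1, (c j * ((Ioc a x).indicator (fun _ => (1:ℝ)) t -
            ((x-a)/h) * (Ioc a b).indicator (fun _ => (1:ℝ)) t))^2 := by
        refine setIntegral_congr_ae measurableSet_Ioo ?_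
        filter_upwards [hae] with t ht _
        exact haeq t ht
      rw [step1, sq_int a b a x ((x-a)/h) (c j) ha le_rfl hax.le hxb hb1]
      have hba : b - a = h := by rw [ha_def, hb_def]; ring
      rw [hba]
      have hhne : h ≠ 0 := ne_of_gt hh
      field_simp
      ring
    have hint : IntegrableOn (fun t => (L x t)^2) (Set.Ioo (0:ℝ) 1) := by
      refine (sq_integrable a x a b ((x-a)/h) (c j) le_rfl hxb).congr ?_
      have h2 : ∀ᵐ t ∂(volume.restrict (Set.Ioo (0:ℝ) 1)), t ≠ a := ae_restrict_of_ae hae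
      filter_upwards [h2] with t ht
      exact (haeq t ht).symm
    -- the two bounds
    have hd0 : 0 ≤ x - a := by linarith
    have hdh : x - a ≤ h := by
      have : b - a = h := by rw [ha_def, hb_def]; ring
      linarith
    have hq0 : 0 ≤ 1 - (x-a)/h := by
      rw [sub_nonneg]
      exact (div_le_one hh).2 hdh
    have hq1 : 1 - (x-a)/h ≤ 1 := by
      have : 0 ≤ (x-a)/h := div_nonneg hd0 hh.le
      linarith
    have hprod2 : (x - a) * (1 - (x-a)/h) ≤ b - x := by
      have h1 : 1 - (x-a)/h = (b - x)/h := by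
        have hba : b - a = h := by rw [ha_def, hb_def]; ring
        field_simp
        linarith
      rw [h1]
      have hbx : 0 ≤ b - x := by linarith
      calc (x - a) * ((b - x)/h) ≤ h * ((b - x)/h) :=
            mul_le_mul_of_nonneg_right hdh (div_nonneg hbx hh.le)
        _ = b - x := by field_simp
    refine ⟨hval, hint, ?_, ?_⟩
    · rw [hval]
      have h1 : (x - a) * (1 - (x-a)/h) ≤ (x - a) * 1 :=
        mul_le_mul_of_nonneg_left hq1 hd0
      have h2 : (c j)^2 * ((x-a) * (1 - (x-a)/h)) ≤ C₀^2 * (x - a) := by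
        have h3 : 0 ≤ (x-a)*(1-(x-a)/h) := mul_nonneg hd0 hq0
        calc (c j)^2 * ((x-a) * (1 - (x-a)/h)) ≤ C₀^2 * ((x-a)*(1-(x-a)/h)) :=
              mul_le_mul_of_nonneg_right (hcb j) h3
          _ ≤ C₀^2 * ((x-a)*1) := by
              have := mul_le_mul_of_nonneg_left h1 (sq_nonneg C₀)
              simpa using this
          _ = C₀^2 * (x-a) := by ring
      calc (c j)^2 * (x - a) * (1 - (x-a)/h) = (c j)^2 * ((x-a) * (1 - (x-a)/h)) := by ring
        _ ≤ C₀^2 * (x-a) := h2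
    · rw [hval]
      have h3 : 0 ≤ (x-a)*(1-(x-a)/h) := mul_nonneg hd0 hq0
      calc (c j)^2 * (x - a) * (1 - (x-a)/h) = (c j)^2 * ((x-a) * (1 - (x-a)/h)) := by ring
        _ ≤ C₀^2 * ((x-a)*(1-(x-a)/h)) := mul_le_mul_of_nonneg_right (hcb j) h3
        _ ≤ C₀^2 * (b - x) := mul_le_mul_of_nonneg_left hprod2 (sq_nonneg C₀)
  -- part 2 helper (y ≤ x)
  have hb2 : ∀ x ∈ Set.Icc (0:ℝ) 1, ∀ y ∈ Set.Icc (0:ℝ) 1, y ≤ x →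
      (∫ t in Set.Ioo (0:ℝ) 1, (L x t - L y t) ^ 2) ≤ (4*C₀^2 + 1) * (x - y) := by
    intro x hx y hy hyx
    have hxy0 : 0 ≤ x - y := by linarith
    rcases eq_or_lt_of_le hy.1 with hy0 | hy0
    · -- y = 0
      have hy0' : y = 0 := hy0.symm
      subst hy0'
      have hL0 : ∀ t ∈ Set.Ioo (0:ℝ) 1, L 0 t = 0 := by
        intro t ht
        rw [hL 0 t]
        have hc0 : ⌈(0:ℝ)/h⌉₊ = 0 := by simp
        rw [hc0]
        push_cast
        have h1 : t ∉ Icc ((0 - 1)*h) (0:ℝ) := fun hm => absurd hm.2 (not_le.2 ht.1)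
        have h2 : t ∉ Ioc ((0 - 1)*h) ((0:ℝ)*h) := fun hm =>
          absurd hm.2 (by rw [zero_mul]; exact not_le.2 ht.1)
        rw [indicator_of_notMem h1, indicator_of_notMem h2]
        ring
      have hstep : (∫ t in Set.Ioo (0:ℝ) 1, (L x t - L 0 t) ^ 2) =
          ∫ t in Set.Ioo (0:ℝ) 1, (L x t) ^ 2 :=
        setIntegral_congr_fun measurableSet_Ioo (fun t ht => by rw [hL0 t ht, sub_zero])
      rw [hstep]
      rcases eq_or_lt_of_le hx.1 with hx0 | hx0
      · have hx0' : x = 0 := hx0.symm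
        subst hx0'
        have hz : (∫ t in Set.Ioo (0:ℝ) 1, (L 0 t) ^ 2) = 0 := by
          have heq : EqOn (fun t => (L 0 t)^2) (fun _ => (0:ℝ)) (Set.Ioo (0:ℝ) 1) := by
            intro t ht
            show L 0 t ^ 2 = 0
            rw [hL0 t ht]
            norm_num
          rw [setIntegral_congr_fun measurableSet_Ioo heq]
          simp
        rw [hz]
        simp
      · obtain ⟨hv, hint, hbd1, hbd2⟩ := hsq x ⟨hx0, hx.2⟩
        obtain ⟨hj1, hjN, hax, hxb⟩ := hmem x ⟨hx0, hx.2⟩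
        have ha0 : 0 ≤ ((⌈x/h⌉₊:ℝ)-1)*h := by
          have h1 : (1:ℝ) ≤ (⌈x/h⌉₊:ℝ) := by exact_mod_cast hj1
          nlinarith
        calc (∫ t in Set.Ioo (0:ℝ) 1, (L x t) ^ 2) ≤ C₀^2 * (x - ((⌈x/h⌉₊:ℝ)-1)*h) := hbd1
          _ ≤ (4*C₀^2+1) * (x - 0) := by nlinarith [sq_nonneg C₀]
    · -- 0 < y, so 0 < x
      have hx0 : 0 < x := lt_of_lt_of_le hy0 hyx
      obtain ⟨hjx1, hjxN, haxx, hxbx⟩ := hmem x ⟨hx0, hx.2⟩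
      obtain ⟨hjy1, hjyN, hayy, hyby⟩ := hmem y ⟨hy0, hy.2⟩
      have hjle : ⌈y/h⌉₊ ≤ ⌈x/h⌉₊ := Nat.ceil_le_ceil (by gcongr)
      rcases eq_or_lt_of_le hjle with hjeq | hjlt
      · -- same interval
        have hyy : y ∈ Set.Ioc (((⌈x/h⌉₊:ℝ) - 1) * h) ((⌈x/h⌉₊:ℝ) * h) := by
          rw [← hjeq]; exact ⟨hayy, hyby⟩
        have := hsame ⌈x/h⌉₊ hjx1 hjxN x ⟨haxx, hxbx⟩ y hyy hyx
        rw [this]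
        have hdh : x - y ≤ h := by
          have h1 := hyy.1
          have h2 := hxbx
          nlinarith
        have hq0 : 0 ≤ 1 - (x-y)/h := by
          rw [sub_nonneg]; exact (div_le_one hh).2 hdh
        have hq1 : 1 - (x-y)/h ≤ 1 := by
          have : 0 ≤ (x-y)/h := div_nonneg hxy0 hh.le
          linarith
        calc (c ⌈x/h⌉₊)^2 * (x-y) * (1 - (x-y)/h)
            ≤ C₀^2 * (x-y) * 1 := by
              nlinarith [mul_le_mul_of_nonneg_right (hcb ⌈x/h⌉₊) (mul_nonneg hxy0 hq0),
                mul_le_mul_of_nonneg_left hq1 (mul_nonneg (sq_nonneg C₀) hxy0)]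
          _ ≤ (4*C₀^2+1) * (x-y) := by nlinarith [sq_nonneg C₀]
      · -- different intervals
        obtain ⟨hvx, hintx, hbd1x, hbd2x⟩ := hsq x ⟨hx0, hx.2⟩
        obtain ⟨hvy, hinty, hbd1y, hbd2y⟩ := hsq y ⟨hy0, hy.2⟩
        have hsep : (⌈y/h⌉₊:ℝ) * h ≤ ((⌈x/h⌉₊:ℝ) - 1) * h := by
          have h1 : (⌈y/h⌉₊:ℝ) + 1 ≤ (⌈x/h⌉₊:ℝ) := by exact_mod_cast hjlt
          nlinarith
        have hg : IntegrableOn (fun t => 2*(L x t)^2 + 2*(L y t)^2) (Set.Ioo (0:ℝ) 1) :=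
          (hintx.const_mul 2).add (hinty.const_mul 2)
        have hmono : (∫ t in Set.Ioo (0:ℝ) 1, (L x t - L y t) ^ 2) ≤
            ∫ t in Set.Ioo (0:ℝ) 1, (2*(L x t)^2 + 2*(L y t)^2) := by
          refine integral_mono_of_nonneg ?_ hg ?_
          · exact Filter.Eventually.of_forall (fun t => sq_nonneg _)
          · refine Filter.Eventually.of_forall (fun t => ?_)
            show (L x t - L y t)^2 ≤ 2*(L x t)^2 + 2*(L y t)^2
            nlinarith [sq_nonneg (L x t + L y t)]
        have hsplit : (∫ t in Set.Ioo (0:ℝ) 1, (2*(L x t)^2 + 2*(L y t)^2)) =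
            2 * (∫ t in Set.Ioo (0:ℝ) 1, (L x t)^2) + 2 * (∫ t in Set.Ioo (0:ℝ) 1, (L y t)^2) := by
          rw [integral_add (hintx.const_mul 2) (hinty.const_mul 2),
            MeasureTheory.integral_const_mul, MeasureTheory.integral_const_mul]
        have hbx : (∫ t in Set.Ioo (0:ℝ) 1, (L x t)^2) ≤ C₀^2 * (x - y) := by
          refine le_trans hbd1x ?_
          have : y ≤ ((⌈x/h⌉₊:ℝ) - 1) * h := le_trans hyby hsep
          nlinarith [sq_nonneg C₀]
        have hby : (∫ t in Set.Ioo (0:ℝ) 1, (L y t)^2) ≤ C₀^2 * (x - y) := by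
          refine le_trans hbd2y ?_
          have : (⌈y/h⌉₊:ℝ) * h < x := lt_of_le_of_lt hsep haxx
          nlinarith [sq_nonneg C₀]
        calc (∫ t in Set.Ioo (0:ℝ) 1, (L x t - L y t) ^ 2)
            ≤ 2 * (∫ t in Set.Ioo (0:ℝ) 1, (L x t)^2) + 2 * (∫ t in Set.Ioo (0:ℝ) 1, (L y t)^2) := by
              rw [← hsplit]; exact hmono
          _ ≤ 2 * (C₀^2 * (x-y)) + 2 * (C₀^2 * (x-y)) := by linarith
          _ ≤ (4*C₀^2+1) * (x - y) := by nlinarith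
  constructor
  · -- part 1
    intro j hj x hx y hy
    rw [Finset.mem_Icc] at hj
    rcases le_total y x with hle | hle
    · rw [hsame j hj.1 hj.2 x hx y hy hle, abs_of_nonneg (by linarith : (0:ℝ) ≤ x - y)]
    · have hsym : ∀ t, (L x t - L y t)^2 = (L y t - L x t)^2 := fun t => by ring
      simp only [hsym]
      rw [hsame j hj.1 hj.2 y hy x hx hle, abs_sub_comm,
        abs_of_nonneg (by linarith : (0:ℝ) ≤ y - x)]
  · -- part 2
    intro x hx y hy
    rcases le_total y x with hle | hle
    · rw [abs_of_nonneg (by linarith : (0:ℝ) ≤ x - y)]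
      exact hb2 x hx y hy hle
    · have hsym : ∀ t, (L x t - L y t)^2 = (L y t - L x t)^2 := fun t => by ring
      simp only [hsym]
      rw [abs_sub_comm, abs_of_nonneg (by linarith : (0:ℝ) ≤ y - x)]
      exact hb2 y hy x hx hle
end
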